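/- arXiv:2509.01698 — 7 statements merged into one kernel-verified Lean document; each statement's English description precedes it below -/
import Mathlib

section
/- Let G be a (bull, chair)-free graph containing an induced odd antihole Q̄ with vertices v_1, …, v_p (p odd, p ≥ 5). Suppose w is a vertex at distance exactly 2 from Q̄ (i.e., w ∉ Q̄, w has no neighbor in Q̄, but w has a neighbor that has a neighbor in Q̄), and suppose w' is a vertex adjacent to w that has at least one neighbor in Q̄ (w' ∉ Q̄). Then w' is adjacent to every vertex of Q̄. -/
open SimpleGraph Finset

/-- The cycle graph on `Fin p` (for `p ≥ 3` this is the cycle `C_p`). -/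
def cycleG (p : ℕ) [NeZero p] : SimpleGraph (Fin p) where
  Adj i j := i ≠ j ∧ (i + 1 = j ∨ j + 1 = i)
  symm := by
    constructor
    rintro i j ⟨h, h'⟩
    exact ⟨h.symm, h'.symm⟩
  loopless := by
    constructor
    rintro i ⟨h, _⟩
    exact h rfl

/-- The clique expansion `C_p[k 0, …, k (p-1)]` of the cycle `C_p`:
vertices of the cycle are replaced by cliques of the prescribed sizes, and
all edges are added between cyclically consecutive cliques. -/
def cliqueExpansion (p : ℕ) [NeZero p] (k : Fin p → ℕ) : SimpleGraph (Σ i : Fin p, Fin (k i)) where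
  Adj a b := a ≠ b ∧ (a.1 = b.1 ∨ a.1 + 1 = b.1 ∨ b.1 + 1 = a.1)
  symm := by
    constructor
    rintro a b ⟨h, h'⟩
    refine ⟨h.symm, ?_⟩
    rcases h' with h' | h' | h'
    · exact Or.inl h'.symm
    · exact Or.inr (Or.inr h')
    · exact Or.inr (Or.inl h')
  loopless := by
    constructor
    rintro a ⟨h, _⟩
    exact h rfl

/-- The join `G ⊕ H` of two graphs: disjoint union plus all edges in between. -/
def joinG {α β : Type*} (G : SimpleGraph α) (H : SimpleGraph β) : SimpleGraph (α ⊕ β) where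
  Adj x y :=
    match x, y with
    | Sum.inl a, Sum.inl b => G.Adj a b
    | Sum.inr a, Sum.inr b => H.Adj a b
    | _, _ => True
  symm := by
    constructor
    rintro (a | a) (b | b) h
    · exact G.adj_symm h
    · trivial
    · trivial
    · exact H.adj_symm h
  loopless := by
    constructor
    rintro (a | a) h
    · exact G.irrefl h
    · exact H.irrefl h

/-- The bull: a triangle with two pendant edges. -/
def bull : SimpleGraph (Fin 5) :=
  SimpleGraph.fromRel (fun a b =>
    (a = 0 ∧ b = 1) ∨ (a = 1 ∧ b = 2) ∨ (a = 2 ∧ b = 3) ∨ (a = 3 ∧ b = 4) ∨ (a = 1 ∧ b = 3))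

/-- The claw `K_{1,3}`. -/
def claw : SimpleGraph (Fin 4) :=
  SimpleGraph.fromRel (fun a b => a = 0 ∧ b ≠ 0)

/-- The chair: the claw with one edge subdivided once. -/
def chair : SimpleGraph (Fin 5) :=
  SimpleGraph.fromRel (fun a b =>
    (a = 0 ∧ b = 1) ∨ (a = 0 ∧ b = 2) ∨ (a = 0 ∧ b = 3) ∨ (a = 3 ∧ b = 4))

/-- `G` contains `H` as a (not necessarily induced) subgraph. -/
def ContainsSub {V W : Type*} (G : SimpleGraph V) (H : SimpleGraph W) : Prop :=
  ∃ f : H →g G, Function.Injective f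

/-- The independence number of a finite graph. -/
noncomputable def indepNum {V : Type*} [Fintype V] (G : SimpleGraph V) : ℕ :=
  sSup {n | ∃ s : Finset V, s.card = n ∧ ∀ a ∈ s, ∀ b ∈ s, a ≠ b → ¬ G.Adj a b}

/-- Clique sizes of the spindle graph `M_{3i+1} = C_{2i+1}[2,1,2,1,…,2,1,1]`. -/
def spindleKs (i : ℕ) : Fin (2 * i + 1) → ℕ :=
  fun j => if j.val % 2 = 0 ∧ j.val < 2 * i then 2 else 1

/-- Clique sizes `[2,…,2,1,3,1,3,1,…,3,1]`: `a` copies of `2`, then a `1`,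
then alternating `3,1`-pairs up to length `p`. -/
def patternKs (p a : ℕ) : Fin p → ℕ :=
  fun j => if j.val < a then 2 else if (j.val - a) % 2 = 0 then 1 else 3

lemma chair_embed {V : Type*} {G : SimpleGraph V} {a0 a1 a2 a3 a4 : V}
    (h01 : G.Adj a0 a1) (h02 : G.Adj a0 a2) (h03 : G.Adj a0 a3) (h34 : G.Adj a3 a4)
    (n12 : ¬G.Adj a1 a2) (n13 : ¬G.Adj a1 a3) (n14 : ¬G.Adj a1 a4)
    (n23 : ¬G.Adj a2 a3) (n24 : ¬G.Adj a2 a4) (n04 : ¬G.Adj a0 a4)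
    (e12 : a1 ≠ a2) (e13 : a1 ≠ a3) (e14 : a1 ≠ a4)
    (e23 : a2 ≠ a3) (e24 : a2 ≠ a4) (e04 : a0 ≠ a4) :
    Nonempty (chair ↪g G) := by
  have e01 := h01.ne
  have e02 := h02.ne
  have e03 := h03.ne
  have e34 := h34.ne
  refine ⟨⟨⟨![a0,a1,a2,a3,a4], ?_⟩, ?_⟩⟩
  · intro x y h
    fin_cases x <;> fin_cases y <;> simp_all
  · intro x y
    show G.Adj (![a0,a1,a2,a3,a4] x) (![a0,a1,a2,a3,a4] y) ↔ chair.Adj x y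
    have h10 := h01.symm; have h20 := h02.symm; have h30 := h03.symm; have h43 := h34.symm
    have n21 : ¬ G.Adj a2 a1 := fun h => n12 h.symm
    have n31 : ¬ G.Adj a3 a1 := fun h => n13 h.symm
    have n41 : ¬ G.Adj a4 a1 := fun h => n14 h.symm
    have n32 : ¬ G.Adj a3 a2 := fun h => n23 h.symm
    have n42 : ¬ G.Adj a4 a2 := fun h => n24 h.symm
    have n40 : ¬ G.Adj a4 a0 := fun h => n04 h.symm
    fin_cases x <;> fin_cases y <;> simp_all [chair, SimpleGraph.fromRel_adj]

lemma bull_embed {V : Type*} {G : SimpleGraph V} {a0 a1 a2 a3 a4 : V}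
    (h01 : G.Adj a0 a1) (h12 : G.Adj a1 a2) (h23 : G.Adj a2 a3) (h34 : G.Adj a3 a4)
    (h13 : G.Adj a1 a3)
    (n02 : ¬G.Adj a0 a2) (n03 : ¬G.Adj a0 a3) (n04 : ¬G.Adj a0 a4)
    (n14 : ¬G.Adj a1 a4) (n24 : ¬G.Adj a2 a4)
    (e02 : a0 ≠ a2) (e03 : a0 ≠ a3) (e04 : a0 ≠ a4)
    (e14 : a1 ≠ a4) (e24 : a2 ≠ a4) :
    Nonempty (bull ↪g G) := by
  have e01 := h01.ne
  have e12 := h12.ne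
  have e23 := h23.ne
  have e34 := h34.ne
  have e13 := h13.ne
  refine ⟨⟨⟨![a0,a1,a2,a3,a4], ?_⟩, ?_⟩⟩
  · intro x y h
    fin_cases x <;> fin_cases y <;> simp_all
  · intro x y
    show G.Adj (![a0,a1,a2,a3,a4] x) (![a0,a1,a2,a3,a4] y) ↔ bull.Adj x y
    have h10 := h01.symm; have h21 := h12.symm; have h32 := h23.symm
    have h43 := h34.symm; have h31 := h13.symm
    have n20 : ¬ G.Adj a2 a0 := fun h => n02 h.symm
    have n30 : ¬ G.Adj a3 a0 := fun h => n03 h.symm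
    have n40 : ¬ G.Adj a4 a0 := fun h => n04 h.symm
    have n41 : ¬ G.Adj a4 a1 := fun h => n14 h.symm
    have n42 : ¬ G.Adj a4 a2 := fun h => n24 h.symm
    fin_cases x <;> fin_cases y <;> simp_all [bull, SimpleGraph.fromRel_adj]


theorem second_neighborhood_dominating {V : Type*} (G : SimpleGraph V)
    (hbull : ¬ Nonempty (bull ↪g G)) (hchair : ¬ Nonempty (chair ↪g G))
    (p : ℕ) [NeZero p] (hodd : Odd p) (hp : 5 ≤ p)
    (v : Fin p → V) (hvinj : Function.Injective v)
    (hv : ∀ i j : Fin p, G.Adj (v i) (v j) ↔ ((cycleG p)ᶜ).Adj i j)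
    (w w' : V) (hw : ∀ i, w ≠ v i) (hwfar : ∀ i, ¬ G.Adj w (v i))
    (hw' : ∀ i, w' ≠ v i) (hww' : G.Adj w w') (hw'adj : ∃ i, G.Adj w' (v i)) :
    ∀ i : Fin p, G.Adj w' (v i) := by
  classical
  letI := Fin.instCommRing p
  intro j0
  by_contra hj0
  obtain ⟨i0, hi0⟩ := hw'adj
  have hadj : ∀ a b : Fin p, G.Adj (v a) (v b) ↔ (a ≠ b ∧ a + 1 ≠ b ∧ b + 1 ≠ a) := by
    intro a b
    rw [hv]
    simp only [SimpleGraph.compl_adj, cycleG]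
    tauto
  -- arithmetic toolkit
  have hval : ∀ k : ℕ, k < p → ((k:ℕ):Fin p).val = k := by
    intro k hk
    rw [Fin.val_natCast]
    exact Nat.mod_eq_of_lt hk
  have keyNe2 : ∀ (a : Fin p) (m n : ℕ), m < n → n < p → a + (m:Fin p) ≠ a + (n:Fin p) := by
    intro a m n hmn hn h
    have h2 : (m : Fin p) = (n : Fin p) := add_left_cancel h
    have h3 := congrArg Fin.val h2
    rw [hval m (by omega), hval n hn] at h3
    omega
  have keyNe : ∀ (a : Fin p) (n : ℕ), 0 < n → n < p → a + (n:Fin p) ≠ a := by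
    intro a n h0 hn h
    refine keyNe2 a 0 n h0 hn ?_
    simpa using h.symm
  have q1 : ∀ a : Fin p, a + 1 ≠ a := by
    intro a; have := keyNe a 1 (by omega) (by omega); rwa [Nat.cast_one] at this
  have q2 : ∀ a : Fin p, a + 2 ≠ a := by
    intro a; have := keyNe a 2 (by omega) (by omega); rwa [show ((2:ℕ):Fin p) = 2 by norm_cast] at this
  have q3 : ∀ a : Fin p, a + 3 ≠ a := by
    intro a; have := keyNe a 3 (by omega) (by omega); rwa [show ((3:ℕ):Fin p) = 3 by norm_cast] at this
  have q4 : ∀ a : Fin p, a + 4 ≠ a := by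
    intro a; have := keyNe a 4 (by omega) (by omega); rwa [show ((4:ℕ):Fin p) = 4 by norm_cast] at this
  have q12 : ∀ a : Fin p, a + 1 ≠ a + 2 := by
    intro a; have := keyNe2 a 1 2 (by omega) (by omega)
    rwa [Nat.cast_one, show ((2:ℕ):Fin p) = 2 by norm_cast] at this
  have q13 : ∀ a : Fin p, a + 1 ≠ a + 3 := by
    intro a; have := keyNe2 a 1 3 (by omega) (by omega)
    rwa [Nat.cast_one, show ((3:ℕ):Fin p) = 3 by norm_cast] at this
  have q23 : ∀ a : Fin p, a + 2 ≠ a + 3 := by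
    intro a; have := keyNe2 a 2 3 (by omega) (by omega)
    rwa [show ((2:ℕ):Fin p) = 2 by norm_cast, show ((3:ℕ):Fin p) = 3 by norm_cast] at this
  -- adjacency facts between antihole vertices at distance 2 and 3
  have adj2 : ∀ a : Fin p, G.Adj (v a) (v (a+2)) := by
    intro a
    refine (hadj a (a+2)).2 ⟨fun h => q2 a h.symm, q12 a, ?_⟩
    rw [show a+2+1 = a+3 from by ring]; exact q3 a
  have adj3 : ∀ a : Fin p, G.Adj (v a) (v (a+3)) := by
    intro a
    refine (hadj a (a+3)).2 ⟨fun h => q3 a h.symm, q13 a, ?_⟩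
    rw [show a+3+1 = a+4 from by ring]; exact q4 a
  have nadj1 : ∀ a : Fin p, ¬ G.Adj (v a) (v (a+1)) := by
    intro a h
    exact ((hadj a (a+1)).1 h).2.1 rfl
  -- propagation (chair)
  have hprop : ∀ i : Fin p, G.Adj w' (v i) → G.Adj w' (v (i+1)) → G.Adj w' (v (i+1+1)) := by
    intro i h1 h2
    rw [show i+1+1 = i+2 from by ring]
    by_contra hno
    refine hchair (chair_embed (a0 := w') (a1 := w) (a2 := v (i+1)) (a3 := v i) (a4 := v (i+2))
      hww'.symm h2 h1 (adj2 i) (hwfar _) (hwfar _) (hwfar _) ?_ ?_ hno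
      (hw _) (hw _) (hw _) ?_ ?_ (hw' _))
    · intro h; exact ((hadj (i+1) i).1 h).2.2 rfl
    · intro h; exact ((hadj (i+1) (i+2)).1 h).2.1 (by ring)
    · intro h; exact q1 i (hvinj h)
    · intro h; exact q12 i (hvinj h)
  have hcons : ∀ i : Fin p, G.Adj w' (v i) → G.Adj w' (v (i+1)) → False := by
    intro i h1 h2
    have hall : ∀ n : ℕ, G.Adj w' (v (i + (n:Fin p))) ∧ G.Adj w' (v (i + (n:Fin p) + 1)) := by
      intro n
      induction n with
      | zero => simp only [Nat.cast_zero, add_zero]; exact ⟨h1, h2⟩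
      | succ n ih =>
          have e : i + ((n+1 : ℕ) : Fin p) = i + (n:Fin p) + 1 := by push_cast; ring
          exact ⟨by rw [e]; exact ih.2, by rw [e]; exact hprop _ ih.1 ih.2⟩
    have hx := (hall ((j0 - i).val)).1
    rw [Fin.cast_val_eq_self] at hx
    rw [show i + (j0 - i) = j0 from by ring] at hx
    exact hj0 hx
  have hnc : ∀ i : Fin p, G.Adj w' (v i) → ¬ G.Adj w' (v (i+1)) := fun i h1 h2 => hcons i h1 h2
  have hncm : ∀ i : Fin p, G.Adj w' (v i) → ¬ G.Adj w' (v (i-1)) := by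
    intro i h1 h2
    refine hcons (i-1) h2 ?_
    rwa [show i - 1 + 1 = i from by ring]
  by_cases hsing : ∀ k : Fin p, G.Adj w' (v k) → k = i0
  · -- singleton case: chair on v i0, v(i0+2), v(i0+3), w', w
    refine hchair (chair_embed (a0 := v i0) (a1 := v (i0+2)) (a2 := v (i0+3)) (a3 := w') (a4 := w)
      (adj2 i0) (adj3 i0) hi0.symm hww'.symm
      (fun h => ((hadj (i0+2) (i0+3)).1 h).2.1 (by ring))
      (fun h => q2 i0 (hsing _ h.symm))
      (fun h => hwfar _ h.symm)
      (fun h => q3 i0 (hsing _ h.symm))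
      (fun h => hwfar _ h.symm)
      (fun h => hwfar _ h.symm)
      (fun h => q23 i0 (hvinj h))
      (fun h => hw' _ h.symm)
      (fun h => hw _ h.symm)
      (fun h => hw' _ h.symm)
      (fun h => hw _ h.symm)
      (fun h => hw _ h.symm))
  · push_neg at hsing
    obtain ⟨k, hk, hki⟩ := hsing
    have hk1 : k ≠ i0 + 1 := by
      intro h; rw [h] at hk; exact hnc i0 hi0 hk
    have hk1' : k + 1 ≠ i0 := by
      intro h; apply hnc k hk; rw [h]; exact hi0
    have hik : G.Adj (v i0) (v k) := by
      refine (hadj i0 k).2 ⟨fun h => hki h.symm, fun h => hk1 h.symm, hk1'⟩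
    by_cases hk2 : k = i0 + 2
    · -- m = i0 - 1
      subst hk2
      have hm1 : i0 - 1 + 1 = i0 := by ring
      have hkm : G.Adj (v (i0+2)) (v (i0-1)) := by
        refine (hadj (i0+2) (i0-1)).2 ⟨?_, ?_, ?_⟩
        · intro h; apply q3 (i0-1); rw [show (i0-1)+3 = i0+2 from by ring, h]
        · intro h; apply q4 (i0-1); rw [show (i0-1)+4 = i0+2+1 from by ring, h]
        · rw [hm1]; intro h; exact q2 i0 h.symm
      refine hbull (bull_embed (a0 := w) (a1 := w') (a2 := v i0) (a3 := v (i0+2)) (a4 := v (i0-1))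
        hww' hi0 hik hkm hk (hwfar _) (hwfar _) (hwfar _) (hncm i0 hi0)
        ?_ (hw _) (hw _) (hw _) (hw' _) ?_)
      · intro h; exact ((hadj i0 (i0-1)).1 h).2.2 hm1
      · intro h
        have hh := hvinj h
        exact q1 (i0-1) (by rw [hm1]; exact hh)
    · -- m = i0 + 1
      have hkm : G.Adj (v k) (v (i0+1)) := by
        refine (hadj k (i0+1)).2 ⟨hk1, ?_, ?_⟩
        · intro h; exact hki (add_right_cancel h)
        · intro h; exact hk2 (by rw [← h]; ring)
      refine hbull (bull_embed (a0 := w) (a1 := w') (a2 := v i0) (a3 := v k) (a4 := v (i0+1))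
        hww' hi0 hik hkm hk (hwfar _) (hwfar _) (hwfar _) (hnc i0 hi0)
        (nadj1 i0) (hw _) (hw _) (hw _) (hw' _) ?_)
      intro h; exact q1 i0 (hvinj h).symm
end

section
/- Let G be a (bull, chair)-free graph containing an induced odd antihole Q̄ with vertices v_1, …, v_p (p odd, p ≥ 5). If some vertex w ∉ Q̄ has exactly 4 neighbors in Q̄, then G contains an induced cycle C_5. -/
open SimpleGraph Finset

instance cycleG.adjDecidable (p : ℕ) [NeZero p] : DecidableRel (cycleG p).Adj :=
  fun i j => inferInstanceAs (Decidable (i ≠ j ∧ (i + 1 = j ∨ j + 1 = i)))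

section Embeds
variable {V : Type*} (G : SimpleGraph V)

lemma chair_embed_s8 (c l1 l2 m t : V)
    (h1 : G.Adj c l1) (h2 : G.Adj c l2) (h3 : G.Adj c m) (h4 : G.Adj m t)
    (n1 : ¬ G.Adj l1 l2) (n2 : ¬ G.Adj l1 m) (n3 : ¬ G.Adj l1 t)
    (n4 : ¬ G.Adj l2 m) (n5 : ¬ G.Adj l2 t) (n6 : ¬ G.Adj c t)
    (d1 : l1 ≠ l2) (d2 : l1 ≠ m) (d3 : l1 ≠ t) (d4 : l2 ≠ m) (d5 : l2 ≠ t) (d6 : c ≠ t) :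
    Nonempty (chair ↪g G) := by
  have e1 := h1.ne; have e2 := h2.ne; have e3 := h3.ne; have e4 := h4.ne
  have s1 := h1.symm; have s2 := h2.symm; have s3 := h3.symm; have s4 := h4.symm
  have m1 : ∀ x y, ¬ G.Adj x y → ¬ G.Adj y x := fun x y h h' => h h'.symm
  refine ⟨⟨⟨![c,l1,l2,m,t], ?_⟩, ?_⟩⟩
  · intro i j h
    fin_cases i <;> fin_cases j <;> simp_all
  · intro i j
    change G.Adj (![c,l1,l2,m,t] i) (![c,l1,l2,m,t] j) ↔ _
    fin_cases i <;> fin_cases j <;> simp_all [chair, SimpleGraph.fromRel_adj]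

lemma bull_embed_s8 (a b c d e : V)
    (h1 : G.Adj a b) (h2 : G.Adj b c) (h3 : G.Adj c d) (h4 : G.Adj d e) (h5 : G.Adj b d)
    (n1 : ¬ G.Adj a c) (n2 : ¬ G.Adj a d) (n3 : ¬ G.Adj a e)
    (n4 : ¬ G.Adj b e) (n5 : ¬ G.Adj c e)
    (d1 : a ≠ c) (d2 : a ≠ d) (d3 : a ≠ e) (d4 : b ≠ e) (d5 : c ≠ e) :
    Nonempty (bull ↪g G) := by
  have e1 := h1.ne; have e2 := h2.ne; have e3 := h3.ne; have e4 := h4.ne; have e5 := h5.ne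
  have s1 := h1.symm; have s2 := h2.symm; have s3 := h3.symm; have s4 := h4.symm
  have s5 := h5.symm
  have m1 : ∀ x y, ¬ G.Adj x y → ¬ G.Adj y x := fun x y h h' => h h'.symm
  refine ⟨⟨⟨![a,b,c,d,e], ?_⟩, ?_⟩⟩
  · intro i j h
    fin_cases i <;> fin_cases j <;> simp_all
  · intro i j
    change G.Adj (![a,b,c,d,e] i) (![a,b,c,d,e] j) ↔ _
    fin_cases i <;> fin_cases j <;> simp_all [bull, SimpleGraph.fromRel_adj]

lemma c5_embed (a b c d e : V)
    (h1 : G.Adj a b) (h2 : G.Adj b c) (h3 : G.Adj c d) (h4 : G.Adj d e) (h5 : G.Adj e a)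
    (n1 : ¬ G.Adj a c) (n2 : ¬ G.Adj a d) (n3 : ¬ G.Adj b d)
    (n4 : ¬ G.Adj b e) (n5 : ¬ G.Adj c e)
    (d1 : a ≠ c) (d2 : a ≠ d) (d3 : b ≠ d) (d4 : b ≠ e) (d5 : c ≠ e) :
    Nonempty (cycleG 5 ↪g G) := by
  have e1 := h1.ne; have e2 := h2.ne; have e3 := h3.ne; have e4 := h4.ne; have e5 := h5.ne
  have s1 := h1.symm; have s2 := h2.symm; have s3 := h3.symm; have s4 := h4.symm
  have s5 := h5.symm
  have m1 : ∀ x y, ¬ G.Adj x y → ¬ G.Adj y x := fun x y h h' => h h'.symm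
  refine ⟨⟨⟨![a,b,c,d,e], ?_⟩, ?_⟩⟩
  · intro i j h
    fin_cases i <;> fin_cases j <;> simp_all
  · intro i j
    change G.Adj (![a,b,c,d,e] i) (![a,b,c,d,e] j) ↔ _
    fin_cases i <;> fin_cases j <;> simp_all [cycleG]

end Embeds

open Fin.NatCast Fin.CommRing

lemma fin_cast_inj {p : ℕ} [NeZero p] {a b : ℕ} (ha : a < p) (hb : b < p)
    (h : (a : Fin p) = b) : a = b := by
  have := congrArg Fin.val h
  rwa [Fin.val_cast_of_lt ha, Fin.val_cast_of_lt hb] at this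

lemma shift_eq {p : ℕ} [NeZero p] (hp : 5 ≤ p) (b : Fin p) {j k : ℕ} (hj : j ≤ 4) (hk : k ≤ 4) :
    b + (j : Fin p) = b + (k : Fin p) ↔ j = k :=
  ⟨fun h => fin_cast_inj (by omega) (by omega) (add_left_cancel h), fun h => by rw [h]⟩

lemma key_shift {p : ℕ} [NeZero p] (b : Fin p) (m : ℕ) :
    b + (m : Fin p) + 1 = b + ((m + 1 : ℕ) : Fin p) := by push_cast; ring

section Antihole
variable {V : Type*} {G : SimpleGraph V} {p : ℕ} [NeZero p] {v : Fin p → V}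

lemma antihole_adj (hp : 5 ≤ p) (hv : ∀ i j, G.Adj (v i) (v j) ↔ ((cycleG p)ᶜ).Adj i j)
    (b : Fin p) {j k : ℕ} (hj : j < 4) (hk : k < 4)
    (h1 : j ≠ k) (h2 : j + 1 ≠ k) (h3 : k + 1 ≠ j) :
    G.Adj (v (b + (j : Fin p))) (v (b + (k : Fin p))) := by
  rw [hv, SimpleGraph.compl_adj]
  constructor
  · exact fun h => h1 ((shift_eq hp b (by omega) (by omega)).1 h)
  · rintro ⟨-, h | h⟩
    · rw [key_shift, shift_eq hp b (by omega) (by omega)] at h; exact h2 h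
    · rw [key_shift, shift_eq hp b (by omega) (by omega)] at h; exact h3 h

lemma antihole_nadj (hv : ∀ i j, G.Adj (v i) (v j) ↔ ((cycleG p)ᶜ).Adj i j)
    (b : Fin p) {j k : ℕ} (h : j = k ∨ j + 1 = k ∨ k + 1 = j) :
    ¬ G.Adj (v (b + (j : Fin p))) (v (b + (k : Fin p))) := by
  rw [hv, SimpleGraph.compl_adj]
  rintro ⟨hne, hnadj⟩
  rcases h with h | h | h
  · exact hne (by rw [h])
  · exact hnadj ⟨hne, Or.inl (by rw [key_shift, h])⟩
  · exact hnadj ⟨hne, Or.inr (by rw [key_shift, h])⟩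

lemma antihole_ne (hp : 5 ≤ p) (hvinj : Function.Injective v)
    (b : Fin p) {j k : ℕ} (hj : j ≤ 4) (hk : k ≤ 4) (h : j ≠ k) :
    v (b + (j : Fin p)) ≠ v (b + (k : Fin p)) :=
  fun hh => h ((shift_eq hp b hj hk).1 (hvinj hh))

variable (hp : 5 ≤ p) (hvinj : Function.Injective v)
  (hv : ∀ i j, G.Adj (v i) (v j) ↔ ((cycleG p)ᶜ).Adj i j)
  {w : V} (hw : ∀ i, w ≠ v i)

/-- chair configuration: three consecutive non-neighbours followed by a neighbour. -/
lemma chair_config (hp : 5 ≤ p) (hvinj : Function.Injective v)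
    (hv : ∀ i j, G.Adj (v i) (v j) ↔ ((cycleG p)ᶜ).Adj i j)
    {w : V} (hw : ∀ i, w ≠ v i) (b : Fin p)
    (h0 : ¬ G.Adj w (v b)) (h1 : ¬ G.Adj w (v (b + 1)))
    (h2 : ¬ G.Adj w (v (b + 2))) (h3 : G.Adj w (v (b + 3))) :
    Nonempty (chair ↪g G) := by
  have A13 : G.Adj (v (b+1)) (v (b+3)) := by
    simpa using antihole_adj (v := v) hp hv b (j := 1) (k := 3)
      (by omega) (by omega) (by omega) (by omega) (by omega)
  have A03 : G.Adj (v b) (v (b+3)) := by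
    simpa using antihole_adj (v := v) hp hv b (j := 0) (k := 3)
      (by omega) (by omega) (by omega) (by omega) (by omega)
  have A02 : G.Adj (v b) (v (b+2)) := by
    simpa using antihole_adj (v := v) hp hv b (j := 0) (k := 2)
      (by omega) (by omega) (by omega) (by omega) (by omega)
  have N01 : ¬ G.Adj (v b) (v (b+1)) := by
    simpa using antihole_nadj (v := v) hv b (j := 0) (k := 1) (by omega)
  have N12 : ¬ G.Adj (v (b+1)) (v (b+2)) := by
    simpa using antihole_nadj (v := v) hv b (j := 1) (k := 2) (by omega)
  have N23 : ¬ G.Adj (v (b+2)) (v (b+3)) := by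
    simpa using antihole_nadj (v := v) hv b (j := 2) (k := 3) (by omega)
  have D01 : v b ≠ v (b+1) := by
    simpa using antihole_ne (v := v) hp hvinj b (j := 0) (k := 1)
      (by omega) (by omega) (by omega)
  have D12 : v (b+1) ≠ v (b+2) := by
    simpa using antihole_ne (v := v) hp hvinj b (j := 1) (k := 2)
      (by omega) (by omega) (by omega)
  have D23 : v (b+2) ≠ v (b+3) := by
    simpa using antihole_ne (v := v) hp hvinj b (j := 2) (k := 3)
      (by omega) (by omega) (by omega)
  -- chair: centre v(b+3); leaves w and v(b+1); path v b – v(b+2)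
  exact chair_embed_s8 G (v (b+3)) w (v (b+1)) (v b) (v (b+2))
    h3.symm A13.symm A03.symm A02
    h1 h0 h2 (fun h => N01 h.symm) N12 (fun h => N23 h.symm)
    (hw _) (hw _) (hw _) (fun h => D01 h.symm) D12 (fun h => D23 h.symm)

/-- bull configuration: two consecutive non-neighbours flanked by neighbours. -/
lemma bull_config (hp : 5 ≤ p) (hvinj : Function.Injective v)
    (hv : ∀ i j, G.Adj (v i) (v j) ↔ ((cycleG p)ᶜ).Adj i j)
    {w : V} (hw : ∀ i, w ≠ v i) (b : Fin p)
    (h0 : G.Adj w (v b)) (h1 : ¬ G.Adj w (v (b + 1)))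
    (h2 : ¬ G.Adj w (v (b + 2))) (h3 : G.Adj w (v (b + 3))) :
    Nonempty (bull ↪g G) := by
  have A13 : G.Adj (v (b+1)) (v (b+3)) := by
    simpa using antihole_adj (v := v) hp hv b (j := 1) (k := 3)
      (by omega) (by omega) (by omega) (by omega) (by omega)
  have A03 : G.Adj (v b) (v (b+3)) := by
    simpa using antihole_adj (v := v) hp hv b (j := 0) (k := 3)
      (by omega) (by omega) (by omega) (by omega) (by omega)
  have A02 : G.Adj (v b) (v (b+2)) := by
    simpa using antihole_adj (v := v) hp hv b (j := 0) (k := 2)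
      (by omega) (by omega) (by omega) (by omega) (by omega)
  have N01 : ¬ G.Adj (v b) (v (b+1)) := by
    simpa using antihole_nadj (v := v) hv b (j := 0) (k := 1) (by omega)
  have N12 : ¬ G.Adj (v (b+1)) (v (b+2)) := by
    simpa using antihole_nadj (v := v) hv b (j := 1) (k := 2) (by omega)
  have N23 : ¬ G.Adj (v (b+2)) (v (b+3)) := by
    simpa using antihole_nadj (v := v) hv b (j := 2) (k := 3) (by omega)
  have D01 : v b ≠ v (b+1) := by
    simpa using antihole_ne (v := v) hp hvinj b (j := 0) (k := 1)
      (by omega) (by omega) (by omega)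
  have D12 : v (b+1) ≠ v (b+2) := by
    simpa using antihole_ne (v := v) hp hvinj b (j := 1) (k := 2)
      (by omega) (by omega) (by omega)
  have D23 : v (b+2) ≠ v (b+3) := by
    simpa using antihole_ne (v := v) hp hvinj b (j := 2) (k := 3)
      (by omega) (by omega) (by omega)
  -- bull path: v(b+1) – v(b+3) – w – v b – v(b+2), triangle v(b+3), w, v b
  exact bull_embed_s8 G (v (b+1)) (v (b+3)) w (v b) (v (b+2))
    A13 h3.symm h0 A02 A03.symm
    (fun h => h1 h.symm) (fun h => N01 h.symm) N12 (fun h => N23 h.symm) h2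
    (fun h => (hw _) h.symm) (fun h => D01 h.symm) D12 (fun h => D23 h.symm) (hw _)

/-- C5 configuration: two consecutive neighbours flanked by non-neighbours. -/
lemma c5_config (hp : 5 ≤ p) (hvinj : Function.Injective v)
    (hv : ∀ i j, G.Adj (v i) (v j) ↔ ((cycleG p)ᶜ).Adj i j)
    {w : V} (hw : ∀ i, w ≠ v i) (b : Fin p)
    (h0 : ¬ G.Adj w (v b)) (h1 : G.Adj w (v (b + 1)))
    (h2 : G.Adj w (v (b + 2))) (h3 : ¬ G.Adj w (v (b + 3))) :
    Nonempty (cycleG 5 ↪g G) := by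
  have A13 : G.Adj (v (b+1)) (v (b+3)) := by
    simpa using antihole_adj (v := v) hp hv b (j := 1) (k := 3)
      (by omega) (by omega) (by omega) (by omega) (by omega)
  have A03 : G.Adj (v b) (v (b+3)) := by
    simpa using antihole_adj (v := v) hp hv b (j := 0) (k := 3)
      (by omega) (by omega) (by omega) (by omega) (by omega)
  have A02 : G.Adj (v b) (v (b+2)) := by
    simpa using antihole_adj (v := v) hp hv b (j := 0) (k := 2)
      (by omega) (by omega) (by omega) (by omega) (by omega)
  have N01 : ¬ G.Adj (v b) (v (b+1)) := by
    simpa using antihole_nadj (v := v) hv b (j := 0) (k := 1) (by omega)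
  have N12 : ¬ G.Adj (v (b+1)) (v (b+2)) := by
    simpa using antihole_nadj (v := v) hv b (j := 1) (k := 2) (by omega)
  have N23 : ¬ G.Adj (v (b+2)) (v (b+3)) := by
    simpa using antihole_nadj (v := v) hv b (j := 2) (k := 3) (by omega)
  have D01 : v b ≠ v (b+1) := by
    simpa using antihole_ne (v := v) hp hvinj b (j := 0) (k := 1)
      (by omega) (by omega) (by omega)
  have D12 : v (b+1) ≠ v (b+2) := by
    simpa using antihole_ne (v := v) hp hvinj b (j := 1) (k := 2)
      (by omega) (by omega) (by omega)
  have D23 : v (b+2) ≠ v (b+3) := by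
    simpa using antihole_ne (v := v) hp hvinj b (j := 2) (k := 3)
      (by omega) (by omega) (by omega)
  -- C5: w – v(b+1) – v(b+3) – v b – v(b+2) – w
  exact c5_embed G w (v (b+1)) (v (b+3)) (v b) (v (b+2))
    h1 A13 A03.symm A02 h2.symm
    h3 h0 (fun h => N01 h.symm) N12 (fun h => N23 h.symm)
    (hw _) (hw _) (fun h => D01 h.symm) D12 (fun h => D23 h.symm)

end Antihole

lemma c5_self : ∀ (i j : Fin 5), ((cycleG 5)ᶜ).Adj (2*i) (2*j) ↔ (cycleG 5).Adj i j := by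
  decide

set_option maxRecDepth 4000 in
lemma seven_lemma : ∀ f : Fin 7 → Bool,
    (Finset.univ.filter (fun i => f i = true)).card = 4 →
    (∀ x, f x = true ∨ f (x+1) = true) →
    ∃ b : Fin 7, f b = false ∧ f (b+1) = true ∧ f (b+2) = true ∧ f (b+3) = false := by
  decide

theorem four_neighbors_gives_C5 {V : Type*} (G : SimpleGraph V)
    (hbull : ¬ Nonempty (bull ↪g G)) (hchair : ¬ Nonempty (chair ↪g G))
    (p : ℕ) [NeZero p] (hodd : Odd p) (hp : 5 ≤ p)
    (v : Fin p → V) (hvinj : Function.Injective v)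
    (hv : ∀ i j : Fin p, G.Adj (v i) (v j) ↔ ((cycleG p)ᶜ).Adj i j)
    (w : V) (hw : ∀ i, w ≠ v i)
    (hdeg : {i : Fin p | G.Adj w (v i)}.ncard = 4) :
    Nonempty (cycleG 5 ↪g G) := by
  classical
  rcases eq_or_lt_of_le hp with hp5 | hp6
  · -- p = 5 : the antihole is itself a C5
    subst hp5
    refine ⟨⟨⟨fun i => v (2 * i), ?_⟩, ?_⟩⟩
    · intro i j h
      have h2 := hvinj h
      have h3 := congrArg Fin.val h2
      rw [Fin.val_mul, Fin.val_mul] at h3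
      have h4 : ((2 : Fin 5)).val = 2 := rfl
      rw [h4] at h3
      have hi := i.isLt
      have hj := j.isLt
      exact Fin.ext (by omega)
    · intro i j
      show G.Adj (v (2 * i)) (v (2 * j)) ↔ (cycleG 5).Adj i j
      rw [hv]
      exact c5_self i j
  · have hp7 : 7 ≤ p := by obtain ⟨m, hm⟩ := hodd; omega
    set T : Finset (Fin p) := Finset.univ.filter (fun i => G.Adj w (v i)) with hT
    have hTmem : ∀ i, i ∈ T ↔ G.Adj w (v i) := fun i => by simp [hT]
    have hTcard : T.card = 4 := by
      have hco : {i : Fin p | G.Adj w (v i)} = ↑T := by ext i; simp [hT]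
      rwa [hco, Set.ncard_coe_finset] at hdeg
    by_cases hC5 : ∃ b : Fin p, ¬ G.Adj w (v b) ∧ G.Adj w (v (b+1)) ∧
        G.Adj w (v (b+2)) ∧ ¬ G.Adj w (v (b+3))
    · obtain ⟨b, c0, c1, c2, c3⟩ := hC5
      exact c5_config hp hvinj hv hw b c0 c1 c2 c3
    · exfalso
      by_cases hgap : ∃ x : Fin p, ¬ G.Adj w (v x) ∧ ¬ G.Adj w (v (x + 1))
      · obtain ⟨x, hx0, hx1⟩ := hgap
        have hTne : T.Nonempty := Finset.card_pos.1 (by rw [hTcard]; norm_num)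
        obtain ⟨n₀, hn₀⟩ := hTne
        have hex : ∃ k : ℕ, G.Adj w (v (x + (k : Fin p))) := by
          refine ⟨(n₀ - x).val, ?_⟩
          rw [Fin.cast_val_eq_self]
          rw [show x + (n₀ - x) = n₀ from by ring]
          exact (hTmem n₀).1 hn₀
        have hmin : ∀ m, m < Nat.find hex → ¬ G.Adj w (v (x + (m : Fin p))) :=
          fun m hm => Nat.find_min hex hm
        have hk₀ : G.Adj w (v (x + ((Nat.find hex : ℕ) : Fin p))) := Nat.find_spec hex
        set k₀ := Nat.find hex with hk₀def
        have hne0 : k₀ ≠ 0 := by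
          intro h; rw [h] at hk₀; simp only [Nat.cast_zero, add_zero] at hk₀; exact hx0 hk₀
        have hne1 : k₀ ≠ 1 := by
          intro h; rw [h] at hk₀; simp only [Nat.cast_one] at hk₀; exact hx1 hk₀
        have hk2 : 2 ≤ k₀ := by omega
        set y : Fin p := x + ((k₀ - 2 : ℕ) : Fin p) with hy
        have hy0 : ¬ G.Adj w (v y) := hmin _ (by omega)
        have hy1 : ¬ G.Adj w (v (y + 1)) := by
          rw [hy, key_shift, show k₀ - 2 + 1 = k₀ - 1 from by omega]
          exact hmin _ (by omega)
        have hy2 : G.Adj w (v (y + 2)) := by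
          rw [hy, show x + ((k₀ - 2 : ℕ) : Fin p) + 2 = x + ((k₀ - 2 : ℕ) : Fin p) + 1 + 1 from
            by ring, key_shift, key_shift, show k₀ - 2 + 1 + 1 = k₀ from by omega]
          exact hk₀
        by_cases hy3 : G.Adj w (v (y - 1))
        · refine hbull (bull_config hp hvinj hv hw (y - 1) hy3 ?_ ?_ ?_)
          · rw [show y - 1 + 1 = y from by ring]; exact hy0
          · rw [show y - 1 + 2 = y + 1 from by ring]; exact hy1
          · rw [show y - 1 + 3 = y + 2 from by ring]; exact hy2
        · refine hchair (chair_config hp hvinj hv hw (y - 1) hy3 ?_ ?_ ?_)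
          · rw [show y - 1 + 1 = y from by ring]; exact hy0
          · rw [show y - 1 + 2 = y + 1 from by ring]; exact hy1
          · rw [show y - 1 + 3 = y + 2 from by ring]; exact hy2
      · have hcov : ∀ x : Fin p, x ∈ T ∨ x + 1 ∈ T := by
          intro x
          by_cases h : G.Adj w (v x)
          · exact Or.inl ((hTmem x).2 h)
          · right
            rw [hTmem]
            by_contra h1
            exact hgap ⟨x, h, h1⟩
        have hsub : (Finset.univ : Finset (Fin p)) ⊆ T ∪ T.image (· - 1) := by
          intro x _
          rcases hcov x with h | h
          · exact Finset.mem_union_left _ h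
          · exact Finset.mem_union_right _ (Finset.mem_image.2 ⟨x + 1, h, by ring⟩)
        have hple : p ≤ 8 := by
          have h1 := Finset.card_le_card hsub
          have h2 := Finset.card_union_le T (T.image (· - 1))
          have h3 := Finset.card_image_le (s := T) (f := (· - 1))
          rw [Finset.card_univ, Fintype.card_fin] at h1
          omega
        have hp7' : p = 7 := by obtain ⟨m, hm⟩ := hodd; omega
        subst hp7'
        obtain ⟨b, b0, b1, b2, b3⟩ := seven_lemma (fun i => decide (G.Adj w (v i)))
          (by
            rw [show (Finset.univ.filter (fun i => decide (G.Adj w (v i)) = true)) = T from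
              by ext i; simp [hT]]
            exact hTcard)
          (by
            intro x
            rcases hcov x with h | h
            · left; simpa using (hTmem x).1 h
            · right; simpa using (hTmem (x+1)).1 h)
        apply hC5
        refine ⟨b, ?_, ?_, ?_, ?_⟩
        · simpa using b0
        · simpa using b1
        · simpa using b2
        · simpa using b3
end

section
/- Let G be a connected (bull, claw)-free finite graph containing an induced odd antihole Q̄. Then the vertex set of Q̄ is a dominating set of G: every vertex of G either belongs to Q̄ or is adjacent to some vertex of Q̄. -/
open SimpleGraph Finset

open scoped Fin.NatCast Fin.CommRing

lemma const_ne_zero (p : ℕ) [NeZero p] (k : ℕ) (h1 : 0 < k) (h2 : k < p) :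
    ((k : ℕ) : Fin p) ≠ 0 := by
  rw [Ne, Fin.natCast_eq_zero]
  intro hd
  exact absurd (Nat.le_of_dvd h1 hd) (by omega)

lemma claw_of_verts {V : Type*} {G : SimpleGraph V} {a b c d : V}
    (hab : G.Adj a b) (hac : G.Adj a c) (had : G.Adj a d)
    (hbc : ¬ G.Adj b c) (hbd : ¬ G.Adj b d) (hcd : ¬ G.Adj c d)
    (nbc : b ≠ c) (nbd : b ≠ d) (ncd : c ≠ d) :
    Nonempty (claw ↪g G) := by
  have nab := hab.ne; have nac := hac.ne; have nad := had.ne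
  refine ⟨⟨⟨![a,b,c,d], ?_⟩, ?_⟩⟩
  · intro i j h
    fin_cases i <;> fin_cases j <;> simp_all
  · intro i j
    have sab := hab.symm; have sac := hac.symm; have sad := had.symm
    have sbc : ¬ G.Adj c b := fun h => hbc h.symm
    have sbd : ¬ G.Adj d b := fun h => hbd h.symm
    have scd : ¬ G.Adj d c := fun h => hcd h.symm
    have la : ∀ x : V, ¬ G.Adj x x := fun x => G.irrefl
    fin_cases i <;> fin_cases j <;>
      simp [claw, SimpleGraph.fromRel_adj] <;> assumption

lemma bull_of_verts {V : Type*} {G : SimpleGraph V} {a b c d e : V}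
    (hab : G.Adj a b) (hbc : G.Adj b c) (hcd : G.Adj c d) (hde : G.Adj d e) (hbd : G.Adj b d)
    (hac : ¬ G.Adj a c) (had : ¬ G.Adj a d) (hae : ¬ G.Adj a e)
    (hbe : ¬ G.Adj b e) (hce : ¬ G.Adj c e)
    (nac : a ≠ c) (nad : a ≠ d) (nae : a ≠ e) (nbe : b ≠ e) (nce : c ≠ e) :
    Nonempty (bull ↪g G) := by
  have nab := hab.ne; have nbc := hbc.ne; have ncd := hcd.ne
  have nde := hde.ne; have nbd := hbd.ne
  refine ⟨⟨⟨![a,b,c,d,e], ?_⟩, ?_⟩⟩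
  · intro i j h
    fin_cases i <;> fin_cases j <;> simp_all
  · intro i j
    have sab := hab.symm; have sbc := hbc.symm; have scd := hcd.symm
    have sde := hde.symm; have sbd := hbd.symm
    have sac : ¬ G.Adj c a := fun h => hac h.symm
    have sad : ¬ G.Adj d a := fun h => had h.symm
    have sae : ¬ G.Adj e a := fun h => hae h.symm
    have sbe : ¬ G.Adj e b := fun h => hbe h.symm
    have sce : ¬ G.Adj e c := fun h => hce h.symm
    have la : ∀ x : V, ¬ G.Adj x x := fun x => G.irrefl
    fin_cases i <;> fin_cases j <;>
      simp [bull, SimpleGraph.fromRel_adj] <;> assumption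

theorem antihole_dominating {V : Type*} [Fintype V] (G : SimpleGraph V)
    (hconn : G.Connected)
    (hbull : ¬ Nonempty (bull ↪g G)) (hclaw : ¬ Nonempty (claw ↪g G))
    (p : ℕ) [NeZero p] (hodd : Odd p) (hp : 5 ≤ p)
    (f : (cycleG p)ᶜ ↪g G) :
    ∀ x : V, (∃ i, x = f i) ∨ (∃ i, G.Adj x (f i)) := by
  classical
  have h1 : (1 : Fin p) ≠ 0 := by simpa using const_ne_zero p 1 (by norm_num) (by omega)
  have h2 : (2 : Fin p) ≠ 0 := by simpa using const_ne_zero p 2 (by norm_num) (by omega)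
  have h3 : (3 : Fin p) ≠ 0 := by simpa using const_ne_zero p 3 (by norm_num) (by omega)
  have h4 : (4 : Fin p) ≠ 0 := by simpa using const_ne_zero p 4 (by norm_num) (by omega)
  have finj : Function.Injective f := f.injective
  have hfadj : ∀ i j : Fin p, G.Adj (f i) (f j) ↔ (i ≠ j ∧ i + 1 ≠ j ∧ j + 1 ≠ i) := by
    intro i j
    rw [f.map_rel_iff]
    simp only [SimpleGraph.compl_adj, cycleG]
    tauto
  have key : ∀ x y : V, G.Adj x y →
      ((∃ i, y = f i) ∨ (∃ i, G.Adj y (f i))) →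
      ((∃ i, x = f i) ∨ (∃ i, G.Adj x (f i))) := by
    intro x y hxy hy
    by_contra hx
    push_neg at hx
    obtain ⟨hx1, hx2⟩ := hx
    have hyimg : ∀ i, y ≠ f i := by
      intro i h
      exact hx2 i (h ▸ hxy)
    obtain ⟨i0, hN0⟩ : ∃ i, G.Adj y (f i) := by
      rcases hy with ⟨i, hi⟩ | h
      · exact absurd hi (hyimg i)
      · exact h
    have claim1 : ∀ i j : Fin p, G.Adj y (f i) → G.Adj y (f j) → i + 1 ≠ j := by
      intro i j hi hj hij
      have nij : i ≠ j := by
        intro h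
        rw [h] at hij
        exact h1 (by linear_combination hij)
      have nfij : ¬ G.Adj (f i) (f j) := by
        rw [hfadj]
        intro h
        exact h.2.1 hij
      exact hclaw (claw_of_verts hxy.symm hi hj (hx2 i) (hx2 j) nfij (hx1 i) (hx1 j)
        (fun h => nij (finj h)))
    by_cases hone : ∀ j, G.Adj y (f j) → j = i0
    · have e1 : G.Adj (f i0) (f (i0 + 2)) := by
        rw [hfadj]
        refine ⟨fun h => h2 (by linear_combination -h), fun h => h1 (by linear_combination -h),
          fun h => h3 (by linear_combination h)⟩
      have e2 : G.Adj (f i0) (f (i0 + 3)) := by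
        rw [hfadj]
        refine ⟨fun h => h3 (by linear_combination -h), fun h => h2 (by linear_combination -h),
          fun h => h4 (by linear_combination h)⟩
      have n1 : ¬ G.Adj y (f (i0 + 2)) := by
        intro h
        exact h2 (by linear_combination (hone _ h))
      have n2 : ¬ G.Adj y (f (i0 + 3)) := by
        intro h
        exact h3 (by linear_combination (hone _ h))
      have n3 : ¬ G.Adj (f (i0 + 2)) (f (i0 + 3)) := by
        rw [hfadj]
        rintro ⟨-, hh, -⟩
        exact hh (by ring)
      exact hclaw (claw_of_verts hN0.symm e1 e2 n1 n2 n3 (hyimg _) (hyimg _)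
        (fun h => h1 (by linear_combination -(finj h))))
    · push_neg at hone
      obtain ⟨j, hjadj, hji⟩ := hone
      have c1 : i0 + 1 ≠ j := claim1 i0 j hN0 hjadj
      have c2 : j + 1 ≠ i0 := claim1 j i0 hjadj hN0
      have nuv : i0 ≠ j := fun h => hji h.symm
      have bullcase : ∀ w : Fin p, (w + 1 = j ∨ j + 1 = w) →
          i0 ≠ w → i0 + 1 ≠ w → w + 1 ≠ i0 → False := by
        intro w hwj nw1 nw2 nw3
        have ew : G.Adj (f i0) (f w) := by
          rw [hfadj]
          exact ⟨nw1, nw2, nw3⟩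
        have euv : G.Adj (f j) (f i0) := by
          rw [hfadj]
          exact ⟨hji, c2, c1⟩
        have nvw : ¬ G.Adj (f j) (f w) := by
          rw [hfadj]
          rintro ⟨-, hb, hc⟩
          rcases hwj with h | h
          · exact hc h
          · exact hb h
        have nyw : ¬ G.Adj y (f w) := by
          intro h
          rcases hwj with hh | hh
          · exact claim1 w j h hjadj hh
          · exact claim1 j w hjadj h hh
        have njw : j ≠ w := by
          rintro rfl
          rcases hwj with h | h <;> exact h1 (by linear_combination h)
        exact hbull (bull_of_verts hxy hjadj euv ew hN0
          (hx2 j) (hx2 i0) (hx2 w) nyw nvw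
          (hx1 j) (hx1 i0) (hx1 w) (hyimg w) (fun h => njw (finj h)))
      by_cases hcase : i0 = j + 2
      · exact bullcase (j - 1) (Or.inl (by ring))
          (fun h => h3 (by linear_combination h - hcase))
          (fun h => h4 (by linear_combination h - hcase))
          (fun h => h2 (by linear_combination -hcase - h))
      · exact bullcase (j + 1) (Or.inr rfl)
          (fun h => c2 h.symm)
          (fun h => nuv (by linear_combination h))
          (fun h => hcase (by linear_combination -h))
  have main : ∀ (a b : V) (w : G.Walk a b),
      ((∃ i, a = f i) ∨ (∃ i, G.Adj a (f i))) →
      ((∃ i, b = f i) ∨ (∃ i, G.Adj b (f i))) := by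
    intro a b w
    induction w with
    | nil => exact id
    | cons h q ih => exact fun ha => ih (key _ _ h.symm ha)
  intro x
  obtain ⟨w⟩ := hconn.preconnected (f 0) x
  exact main _ _ w (Or.inl ⟨0, rfl⟩)
end

section
/- Let G be a connected (bull, claw)-free finite graph containing an induced odd antihole Q̄. Let w and w' be two distinct vertices outside Q̄ such that some vertex of Q̄ is adjacent to neither w nor w' (i.e., N_{Q̄}(w) ∪ N_{Q̄}(w') ≠ V(Q̄)). Then w and w' are adjacent in G. -/
open SimpleGraph Finset

section AuxiliaryLemmas

variable {V : Type*} {G : SimpleGraph V}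

private lemma mkClaw (c a b d : V)
    (hca : G.Adj c a) (hcb : G.Adj c b) (hcd : G.Adj c d)
    (hab : ¬ G.Adj a b) (had : ¬ G.Adj a d) (hbd : ¬ G.Adj b d)
    (nab : a ≠ b) (nad : a ≠ d) (nbd : b ≠ d) : Nonempty (claw ↪g G) := by
  have h1 := hca.ne; have h2 := hcb.ne; have h3 := hcd.ne
  refine ⟨⟨⟨![c,a,b,d], ?_⟩, ?_⟩⟩
  · intro i j h
    fin_cases i <;> fin_cases j <;> simp_all
  · intro i j
    fin_cases i <;> fin_cases j <;> simp [claw, SimpleGraph.fromRel_adj] <;>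
    first
    | exact iff_of_false (G.loopless _) (by decide)
    | exact iff_of_true hca (by decide)
    | exact iff_of_true hcb (by decide)
    | exact iff_of_true hcd (by decide)
    | exact iff_of_true hca.symm (by decide)
    | exact iff_of_true hcb.symm (by decide)
    | exact iff_of_true hcd.symm (by decide)
    | exact iff_of_false hab (by decide)
    | exact iff_of_false had (by decide)
    | exact iff_of_false hbd (by decide)
    | exact iff_of_false (fun hx => hab (G.adj_symm hx)) (by decide)
    | exact iff_of_false (fun hx => had (G.adj_symm hx)) (by decide)
    | exact iff_of_false (fun hx => hbd (G.adj_symm hx)) (by decide)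
    | assumption
    | exact hca.symm
    | exact hcb.symm
    | exact hcd.symm
    | exact fun hx => hab (G.adj_symm hx)
    | exact fun hx => had (G.adj_symm hx)
    | exact fun hx => hbd (G.adj_symm hx)

private lemma mkBull (a b c d e : V)
    (hab : G.Adj a b) (hbc : G.Adj b c) (hcd : G.Adj c d) (hde : G.Adj d e) (hbd : G.Adj b d)
    (nac : ¬ G.Adj a c) (nad : ¬ G.Adj a d) (nae : ¬ G.Adj a e) (nbe : ¬ G.Adj b e)
    (nce : ¬ G.Adj c e)
    (dac : a ≠ c) (dad : a ≠ d) (dae : a ≠ e) (dbe : b ≠ e) (dce : c ≠ e) :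
    Nonempty (bull ↪g G) := by
  have h1 := hab.ne; have h2 := hbc.ne; have h3 := hcd.ne; have h4 := hde.ne
  have h5 := hbd.ne
  refine ⟨⟨⟨![a,b,c,d,e], ?_⟩, ?_⟩⟩
  · intro i j h
    fin_cases i <;> fin_cases j <;> simp_all
  · intro i j
    fin_cases i <;> fin_cases j <;> simp [bull, SimpleGraph.fromRel_adj] <;>
    first
    | exact iff_of_false (G.loopless _) (by decide)
    | exact iff_of_true hab (by decide)
    | exact iff_of_true hbc (by decide)
    | exact iff_of_true hcd (by decide)
    | exact iff_of_true hde (by decide)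
    | exact iff_of_true hbd (by decide)
    | exact iff_of_true hab.symm (by decide)
    | exact iff_of_true hbc.symm (by decide)
    | exact iff_of_true hcd.symm (by decide)
    | exact iff_of_true hde.symm (by decide)
    | exact iff_of_true hbd.symm (by decide)
    | exact iff_of_false nac (by decide)
    | exact iff_of_false nad (by decide)
    | exact iff_of_false nae (by decide)
    | exact iff_of_false nbe (by decide)
    | exact iff_of_false nce (by decide)
    | exact iff_of_false (fun hx => nac (G.adj_symm hx)) (by decide)
    | exact iff_of_false (fun hx => nad (G.adj_symm hx)) (by decide)
    | exact iff_of_false (fun hx => nae (G.adj_symm hx)) (by decide)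
    | exact iff_of_false (fun hx => nbe (G.adj_symm hx)) (by decide)
    | exact iff_of_false (fun hx => nce (G.adj_symm hx)) (by decide)
    | assumption
    | exact hab.symm
    | exact hbc.symm
    | exact hcd.symm
    | exact hde.symm
    | exact hbd.symm
    | exact fun hx => nac (G.adj_symm hx)
    | exact fun hx => nad (G.adj_symm hx)
    | exact fun hx => nae (G.adj_symm hx)
    | exact fun hx => nbe (G.adj_symm hx)
    | exact fun hx => nce (G.adj_symm hx)

/-- An abstract induced odd antihole: adjacency rule plus injectivity. -/
private def AHPack (G : SimpleGraph V) (p : ℕ) [NeZero p] (q : Fin p → V) : Prop :=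
  (∀ a b : Fin p, G.Adj (q a) (q b) ↔ (a ≠ b ∧ ¬(a + 1 = b ∨ b + 1 = a))) ∧
  (∀ a b : Fin p, q a = q b → a = b)

private lemma AHPack.shift {p : ℕ} [NeZero p] {q : Fin p → V}
    (h : AHPack G p q) (s : Fin p) : AHPack G p (fun j => q (s + j)) := by
  obtain ⟨h1, h2⟩ := h
  constructor
  · intro a b
    simp only [h1, add_assoc, ne_eq, add_right_inj]
  · intro a b hab
    exact add_left_cancel (h2 _ _ hab)

private lemma fin_v1 {p : ℕ} [NeZero p] (hp : 5 ≤ p) : (1 : Fin p).val = 1 := by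
  rw [Fin.val_one']; exact Nat.mod_eq_of_lt (by omega)

private lemma fin_v2 {p : ℕ} [NeZero p] (hp : 5 ≤ p) : ((1:Fin p)+1).val = 2 := by
  rw [Fin.val_add, fin_v1 hp]; exact Nat.mod_eq_of_lt (by omega)

private lemma fin_v3 {p : ℕ} [NeZero p] (hp : 5 ≤ p) : ((1:Fin p)+1+1).val = 3 := by
  rw [Fin.val_add, fin_v2 hp, fin_v1 hp]; exact Nat.mod_eq_of_lt (by omega)

private lemma fin_v4 {p : ℕ} [NeZero p] (hp : 5 ≤ p) : ((1:Fin p)+1+1+1).val = 4 := by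
  rw [Fin.val_add, fin_v3 hp, fin_v1 hp]; exact Nat.mod_eq_of_lt (by omega)

/-- Key stability lemma: an outside vertex with a neighbour on the antihole cannot
have two (cyclically) consecutive non-neighbours on the antihole. -/
private lemma stable_aux {p : ℕ} [NeZero p] (hp : 5 ≤ p)
    (hbull : ¬ Nonempty (bull ↪g G)) (hclaw : ¬ Nonempty (claw ↪g G))
    {q : Fin p → V} (hP : AHPack G p q)
    {v : V} (hv : ∀ i, v ≠ q i) (hA : ∃ i, G.Adj (q i) v)
    (h1 : ¬ G.Adj (q 1) v) (h2 : ¬ G.Adj (q (1+1)) v) : False := by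
  obtain ⟨hadj, hinj⟩ := hP
  have hne : ∀ x y : Fin p, x.val ≠ y.val → x ≠ y :=
    fun x y h hxy => h (congrArg Fin.val hxy)
  have v0 : (0:Fin p).val = 0 := Fin.val_zero p
  have v1 := fin_v1 (p := p) hp
  have v2 := fin_v2 (p := p) hp
  have v3 := fin_v3 (p := p) hp
  have v4 := fin_v4 (p := p) hp
  have dq : ∀ x y : Fin p, x.val ≠ y.val → q x ≠ q y :=
    fun x y h hq' => h (congrArg Fin.val (hinj _ _ hq'))
  -- adjacency facts
  have a02 : G.Adj (q 0) (q (1+1)) := by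
    rw [hadj]
    refine ⟨hne _ _ (by omega), ?_⟩
    rintro (h | h)
    · rw [zero_add] at h; exact hne _ _ (by omega) h
    · exact hne _ _ (by omega) h
  have a03 : G.Adj (q 0) (q (1+1+1)) := by
    rw [hadj]
    refine ⟨hne _ _ (by omega), ?_⟩
    rintro (h | h)
    · rw [zero_add] at h; exact hne _ _ (by omega) h
    · exact hne _ _ (by omega) h
  have a13 : G.Adj (q 1) (q (1+1+1)) := by
    rw [hadj]
    refine ⟨hne _ _ (by omega), ?_⟩
    rintro (h | h)
    · exact hne _ _ (by omega) h
    · exact hne _ _ (by omega) h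
  have n12 : ¬ G.Adj (q 1) (q (1+1)) := by
    rw [hadj]; rintro ⟨_, hc⟩; exact hc (Or.inl rfl)
  have n23 : ¬ G.Adj (q (1+1)) (q (1+1+1)) := by
    rw [hadj]; rintro ⟨_, hc⟩; exact hc (Or.inl rfl)
  have n01 : ¬ G.Adj (q 0) (q 1) := by
    rw [hadj]; rintro ⟨_, hc⟩; exact hc (Or.inl (zero_add 1))
  -- Step 1: any neighbour of v on the antihole is q 0 or q (1+1+1)
  have restrict : ∀ j : Fin p, G.Adj (q j) v → j = 0 ∨ j = 1+1+1 := by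
    intro j hj
    by_contra hcc
    push_neg at hcc
    obtain ⟨hj0, hj3⟩ := hcc
    have hj1 : j ≠ 1 := fun h => h1 (h ▸ hj)
    have hj2 : j ≠ 1+1 := fun h => h2 (h ▸ hj)
    refine hclaw (mkClaw (q j) v (q 1) (q (1+1)) hj ?_ ?_ ?_ ?_ n12 ?_ ?_ ?_)
    · rw [hadj]
      refine ⟨hj1, ?_⟩
      rintro (h | h)
      · exact hj0 ((add_left_inj 1).mp (by rw [zero_add]; exact h))
      · exact hj2 h.symm
    · rw [hadj]
      refine ⟨hj2, ?_⟩
      rintro (h | h)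
      · exact hj1 ((add_left_inj 1).mp h)
      · exact hj3 h.symm
    · exact fun h => h1 h.symm
    · exact fun h => h2 h.symm
    · exact hv 1
    · exact hv (1+1)
    · exact dq _ _ (by omega)
  by_cases hA0 : G.Adj (q 0) v
  · by_cases hA3 : G.Adj (q (1+1+1)) v
    · -- bull: pendant q(1+1) at q 0, triangle {q 0, v, q(1+1+1)}, pendant q 1 at q(1+1+1)
      refine hbull (mkBull (q (1+1)) (q 0) v (q (1+1+1)) (q 1)
        a02.symm hA0 hA3.symm a13.symm a03
        h2 n23 (fun h => n12 h.symm) n01 (fun h => h1 h.symm)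
        (Ne.symm (hv _)) (dq _ _ (by omega)) (dq _ _ (by omega)) (dq _ _ (by omega)) (hv 1))
    · -- claw (q 0; v, q(1+1), q(1+1+1))
      refine hclaw (mkClaw (q 0) v (q (1+1)) (q (1+1+1)) hA0 a02 a03
        (fun h => h2 h.symm) (fun h => hA3 h.symm) n23
        (hv _) (hv _) (dq _ _ (by omega)))
  · by_cases hA3 : G.Adj (q (1+1+1)) v
    · -- claw (q(1+1+1); v, q 1, q 0)
      refine hclaw (mkClaw (q (1+1+1)) v (q 1) (q 0) hA3 a13.symm a03.symm
        (fun h => h1 h.symm) (fun h => hA0 h.symm) (fun h => n01 h.symm)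
        (hv 1) (hv 0) (dq _ _ (by omega)))
    · obtain ⟨j0, hj0⟩ := hA
      rcases restrict j0 hj0 with rfl | rfl
      · exact hA0 hj0
      · exact hA3 hj0

open Fin.NatCast in
/-- An outside vertex with a neighbour on the antihole has two consecutive
neighbours on the antihole (uses oddness of `p`). -/
private lemma consec_aux {p : ℕ} [NeZero p] (hp : 5 ≤ p) (hodd : Odd p)
    (hbull : ¬ Nonempty (bull ↪g G)) (hclaw : ¬ Nonempty (claw ↪g G))
    {q : Fin p → V} (hP : AHPack G p q)
    (v : V) (hv : ∀ i, v ≠ q i) (hA : ∃ i, G.Adj (q i) v) :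
    ∃ a : Fin p, G.Adj (q a) v ∧ G.Adj (q (a+1)) v := by
  by_contra hcc
  push_neg at hcc
  have flip : ∀ a : Fin p, G.Adj (q (a+1)) v ↔ ¬ G.Adj (q a) v := by
    intro a
    constructor
    · intro h hA'
      exact hcc a hA' h
    · intro hna
      by_contra hna1
      have e1 : a - 1 + 1 = a := sub_add_cancel a 1
      have e2 : a - 1 + (1+1) = a + 1 := by rw [← add_assoc, e1]
      obtain ⟨i, hi⟩ := hA
      refine stable_aux hp hbull hclaw (hP.shift (a-1)) (fun i => hv _)
        ⟨-(a-1)+i, ?_⟩ ?_ ?_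
      · show G.Adj (q (a-1+(-(a-1)+i))) v
        rw [add_neg_cancel_left]; exact hi
      · show ¬ G.Adj (q (a-1+1)) v
        rw [e1]; exact hna
      · show ¬ G.Adj (q (a-1+(1+1))) v
        rw [e2]; exact hna1
  have key : ∀ (n : ℕ) (a : Fin p),
      G.Adj (q (a + (n : Fin p))) v ↔ (Even n ↔ G.Adj (q a) v) := by
    intro n
    induction n with
    | zero => intro a; simp
    | succ m ih =>
      intro a
      have hc : ((m+1 : ℕ) : Fin p) = ((m : ℕ) : Fin p) + 1 := by push_cast; ring
      rw [hc, ← add_assoc, flip, ih, Nat.even_add_one]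
      tauto
  obtain ⟨i, hi⟩ := hA
  have hk := key p i
  rw [Fin.natCast_self, add_zero] at hk
  have hnE : ¬ Even p := (Nat.not_even_iff_odd.mpr hodd)
  tauto

/-- In a connected graph, every vertex outside the antihole has a neighbour on it. -/
private lemma hasnbr_aux {p : ℕ} [NeZero p] (hp : 5 ≤ p) (hodd : Odd p)
    (hconn : G.Connected)
    (hbull : ¬ Nonempty (bull ↪g G)) (hclaw : ¬ Nonempty (claw ↪g G))
    {q : Fin p → V} (hP : AHPack G p q)
    (v : V) (hv : ∀ i, v ≠ q i) : ∃ i, G.Adj (q i) v := by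
  by_contra hA
  push_neg at hA
  have closed : ∀ z u : V, (∀ i, z ≠ q i) → (∀ i, ¬ G.Adj (q i) z) → G.Adj z u →
      (∀ i, u ≠ q i) ∧ (∀ i, ¬ G.Adj (q i) u) := by
    intro z u hz1 hz2 hzu
    by_cases hQ : ∃ i, u = q i
    · obtain ⟨i, rfl⟩ := hQ
      exact absurd hzu.symm (hz2 i)
    · push_neg at hQ
      refine ⟨hQ, ?_⟩
      intro i hiu
      obtain ⟨a, ha1, ha2⟩ := consec_aux hp hodd hbull hclaw hP u hQ ⟨i, hiu⟩
      refine hclaw (mkClaw u z (q a) (q (a+1)) hzu.symm ha1.symm ha2.symm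
        (fun h => hz2 a h.symm) (fun h => hz2 (a+1) h.symm) ?_ (hz1 a) (hz1 (a+1)) ?_)
      · rw [hP.1]; rintro ⟨_, hc⟩; exact hc (Or.inl rfl)
      · intro h
        have h' : a = a + 1 := hP.2 _ _ h
        have h1 : (1 : Fin p) = 0 := (left_eq_add.mp h')
        have := congrArg Fin.val h1
        rw [fin_v1 hp, Fin.val_zero] at this
        omega
  have prop : ∀ z x : V, G.Reachable z x → (∀ i, z ≠ q i) → (∀ i, ¬ G.Adj (q i) z) →
      (∀ i, x ≠ q i) ∧ (∀ i, ¬ G.Adj (q i) x) := by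
    intro z x hr
    obtain ⟨wlk⟩ := hr
    induction wlk with
    | nil => exact fun h1 h2 => ⟨h1, h2⟩
    | cons h pw ih =>
      intro h1 h2
      obtain ⟨h1', h2'⟩ := closed _ _ h1 h2 h
      exact ih h1' h2'
  have hfin := prop v (q 0) (hconn.preconnected v (q 0)) hv hA
  exact (hfin.1 0) rfl

end AuxiliaryLemmas

theorem outside_vertices_adjacent {V : Type*} [Fintype V] (G : SimpleGraph V)
    (hconn : G.Connected)
    (hbull : ¬ Nonempty (bull ↪g G)) (hclaw : ¬ Nonempty (claw ↪g G))
    (p : ℕ) [NeZero p] (hodd : Odd p) (hp : 5 ≤ p)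
    (f : (cycleG p)ᶜ ↪g G)
    (w w' : V) (hne : w ≠ w')
    (hw : w ∉ Set.range f) (hw' : w' ∉ Set.range f)
    (hmiss : ∃ i : Fin p, ¬ G.Adj (f i) w ∧ ¬ G.Adj (f i) w') :
    G.Adj w w' := by
  classical
  by_contra hcon
  obtain ⟨i0, hi0w, hi0w'⟩ := hmiss
  -- the antihole pack for `f` itself
  have hPf : AHPack G p (fun j => f j) := by
    constructor
    · intro a b
      rw [SimpleGraph.Embedding.map_adj_iff, SimpleGraph.compl_adj]
      show a ≠ b ∧ ¬(a ≠ b ∧ (a + 1 = b ∨ b + 1 = a)) ↔ _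
      constructor
      · rintro ⟨hab, hc⟩
        exact ⟨hab, fun hor => hc ⟨hab, hor⟩⟩
      · rintro ⟨hab, hc⟩
        exact ⟨hab, fun hx => hc hx.2⟩
    · intro a b h
      exact f.injective h
  -- shifted antihole, so that the jointly missed vertex sits at index 1
  set q : Fin p → V := fun j => f (i0 - 1 + j) with hqdef
  have hP : AHPack G p q := hPf.shift (i0 - 1)
  have hvw : ∀ i, w ≠ q i := fun i h => hw ⟨i0 - 1 + i, h.symm⟩
  have hvw' : ∀ i, w' ≠ q i := fun i h => hw' ⟨i0 - 1 + i, h.symm⟩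
  have hq1 : q 1 = f i0 := by
    show f (i0 - 1 + 1) = f i0
    rw [sub_add_cancel]
  have hB1w : ¬ G.Adj (q 1) w := by rw [hq1]; exact hi0w
  have hB1w' : ¬ G.Adj (q 1) w' := by rw [hq1]; exact hi0w'
  have hAw : ∃ i, G.Adj (q i) w := hasnbr_aux hp hodd hconn hbull hclaw hP w hvw
  have hAw' : ∃ i, G.Adj (q i) w' := hasnbr_aux hp hodd hconn hbull hclaw hP w' hvw'
  -- stability for w and w'
  have stw : ∀ k : Fin p, ¬ G.Adj (q k) w → ¬ G.Adj (q (k+1)) w → False := by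
    intro k hk hk1
    have e1 : k - 1 + 1 = k := sub_add_cancel k 1
    have e2 : k - 1 + (1+1) = k + 1 := by rw [← add_assoc, e1]
    obtain ⟨i, hi⟩ := hAw
    refine stable_aux hp hbull hclaw (hP.shift (k-1)) (fun i => hvw _)
      ⟨-(k-1)+i, ?_⟩ ?_ ?_
    · show G.Adj (q (k-1+(-(k-1)+i))) w
      rw [add_neg_cancel_left]; exact hi
    · show ¬ G.Adj (q (k-1+1)) w
      rw [e1]; exact hk
    · show ¬ G.Adj (q (k-1+(1+1))) w
      rw [e2]; exact hk1
  have stw' : ∀ k : Fin p, ¬ G.Adj (q k) w' → ¬ G.Adj (q (k+1)) w' → False := by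
    intro k hk hk1
    have e1 : k - 1 + 1 = k := sub_add_cancel k 1
    have e2 : k - 1 + (1+1) = k + 1 := by rw [← add_assoc, e1]
    obtain ⟨i, hi⟩ := hAw'
    refine stable_aux hp hbull hclaw (hP.shift (k-1)) (fun i => hvw' _)
      ⟨-(k-1)+i, ?_⟩ ?_ ?_
    · show G.Adj (q (k-1+(-(k-1)+i))) w'
      rw [add_neg_cancel_left]; exact hi
    · show ¬ G.Adj (q (k-1+1)) w'
      rw [e1]; exact hk
    · show ¬ G.Adj (q (k-1+(1+1))) w'
      rw [e2]; exact hk1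
  have h0w : G.Adj (q 0) w := by
    by_contra h0
    exact stw 0 h0 (by rw [zero_add]; exact hB1w)
  have h0w' : G.Adj (q 0) w' := by
    by_contra h0
    exact stw' 0 h0 (by rw [zero_add]; exact hB1w')
  -- numeric facts
  have hnev : ∀ x y : Fin p, x.val ≠ y.val → x ≠ y :=
    fun x y h hxy => h (congrArg Fin.val hxy)
  have v0 : (0:Fin p).val = 0 := Fin.val_zero p
  have v1 := fin_v1 (p := p) hp
  have v2 := fin_v2 (p := p) hp
  have v3 := fin_v3 (p := p) hp
  have v4 := fin_v4 (p := p) hp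
  have dq : ∀ x y : Fin p, x.val ≠ y.val → q x ≠ q y :=
    fun x y h hq' => h (congrArg Fin.val (hP.2 _ _ hq'))
  have a03 : G.Adj (q 0) (q (1+1+1)) := by
    rw [hP.1]
    refine ⟨hnev _ _ (by omega), ?_⟩
    rintro (h | h)
    · rw [zero_add] at h; exact hnev _ _ (by omega) h
    · exact hnev _ _ (by omega) h
  have a13 : G.Adj (q 1) (q (1+1+1)) := by
    rw [hP.1]
    refine ⟨hnev _ _ (by omega), ?_⟩
    rintro (h | h)
    · exact hnev _ _ (by omega) h
    · exact hnev _ _ (by omega) h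
  have n01 : ¬ G.Adj (q 0) (q 1) := by
    rw [hP.1]; rintro ⟨_, hc⟩; exact hc (Or.inl (zero_add 1))
  by_cases hEx : ∃ j : Fin p, j ≠ 0 ∧ j ≠ 1 ∧ j ≠ 1+1 ∧ G.Adj (q j) w ∧ G.Adj (q j) w'
  · obtain ⟨j, hj0, hj1, hj2, hjw, hjw'⟩ := hEx
    refine hclaw (mkClaw (q j) w w' (q 1) hjw hjw' ?_ hcon
      (fun h => hB1w h.symm) (fun h => hB1w' h.symm) hne (hvw 1) (hvw' 1))
    rw [hP.1]
    refine ⟨hj1, ?_⟩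
    rintro (h | h)
    · exact hj0 ((add_left_inj 1).mp (by rw [zero_add]; exact h))
    · exact hj2 h.symm
  · push_neg at hEx
    have h30 : (1+1+1 : Fin p) ≠ 0 := hnev _ _ (by omega)
    have h31 : (1+1+1 : Fin p) ≠ 1 := hnev _ _ (by omega)
    have h32 : (1+1+1 : Fin p) ≠ 1+1 := hnev _ _ (by omega)
    by_cases hw3 : G.Adj (q (1+1+1)) w
    · by_cases hw3' : G.Adj (q (1+1+1)) w'
      · exact hEx (1+1+1) h30 h31 h32 hw3 hw3'
      · -- bull: pendant q 1 at q(1+1+1), triangle {q(1+1+1), w, q 0}, pendant w' at q 0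
        refine hbull (mkBull (q 1) (q (1+1+1)) w (q 0) w'
          a13 hw3 h0w.symm h0w' a03.symm
          hB1w (fun h => n01 h.symm) hB1w' hw3' hcon
          (Ne.symm (hvw 1)) (dq _ _ (by omega)) (Ne.symm (hvw' 1)) (Ne.symm (hvw' _)) hne)
    · by_cases hw3' : G.Adj (q (1+1+1)) w'
      · -- bull with w and w' swapped
        refine hbull (mkBull (q 1) (q (1+1+1)) w' (q 0) w
          a13 hw3' h0w'.symm h0w a03.symm
          hB1w' (fun h => n01 h.symm) hB1w hw3 (fun h => hcon h.symm)
          (Ne.symm (hvw' 1)) (dq _ _ (by omega)) (Ne.symm (hvw 1)) (Ne.symm (hvw _)) hne.symm)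
      · -- claw (q 0; w, w', q(1+1+1))
        refine hclaw (mkClaw (q 0) w w' (q (1+1+1)) h0w h0w' a03 hcon
          (fun h => hw3 h.symm) (fun h => hw3' h.symm) hne (hvw _) (hvw' _))
end

section
/- Let G be a (bull, chair)-free graph containing an induced odd cycle Q = v_1 v_2 … v_p v_1 of length p ≥ 7 (p odd). For each i (modulo p), let A_i be the set of vertices w ∉ Q whose neighborhood in Q is exactly {v_{i-1}, v_i, v_{i+1}}. Then: (a) any two distinct vertices of A_i ∪ {v_i} are adjacent; (b) every vertex of A_i ∪ {v_i} is adjacent to every vertex of A_{i+1} ∪ {v_{i+1}}; (c) if j ∉ {i−1, i, i+1} (mod p), then no vertex of A_i ∪ {v_i} is adjacent to any vertex of A_j ∪ {v_j}. Consequently, the subgraph of G induced by Q ∪ A_1 ∪ … ∪ A_p is isomorphic to the clique expansion C_p[1+|A_1|, …, 1+|A_p|]. -/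
open SimpleGraph Finset

/-- The vertices outside the cycle whose neighborhood on the cycle is exactly
`{v (i-1), v i, v (i+1)}`. -/
def AsetI {V : Type*} (G : SimpleGraph V) {p : ℕ} [NeZero p] (v : Fin p → V)
    (i : Fin p) : Set V :=
  {w | (∀ j, w ≠ v j) ∧ ∀ j : Fin p, G.Adj w (v j) ↔ (j = i - 1 ∨ j = i ∨ j = i + 1)}

/-- The vertices outside the cycle whose neighborhood on the cycle is exactly
`{v (i-1), v i, v (i+1)}` for some `i`. -/
def Aset {V : Type*} (G : SimpleGraph V) {p : ℕ} [NeZero p] (v : Fin p → V) : Set V :=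
  ⋃ i : Fin p, AsetI G v i

/-- The vertices outside the cycle adjacent to all vertices of the cycle. -/
def Dset {V : Type*} (G : SimpleGraph V) {p : ℕ} (v : Fin p → V) : Set V :=
  {w | (∀ j, w ≠ v j) ∧ ∀ j : Fin p, G.Adj w (v j)}

section Helpers

variable {p : ℕ} [NeZero p]

open Fin.NatCast Fin.CommRing

lemma fin_shift_ne (hp : 7 ≤ p) (c : ℕ) (h1 : 0 < c) (h2 : c < p) (x : Fin p) :
    x + (c : Fin p) ≠ x := by
  intro h
  rw [add_eq_left] at h
  have h' := congrArg Fin.val h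
  rw [Fin.val_natCast, Nat.mod_eq_of_lt h2] at h'
  simp at h'
  omega

lemma F1 (hp : 7 ≤ p) (x : Fin p) : x + 1 ≠ x := by
  have := fin_shift_ne hp 1 (by norm_num) (by omega) x
  rwa [show x + ((1:ℕ):Fin p) = x + 1 by push_cast; ring] at this

lemma F2 (hp : 7 ≤ p) (x : Fin p) : x + 1 + 1 ≠ x := by
  have := fin_shift_ne hp 2 (by norm_num) (by omega) x
  rwa [show x + ((2:ℕ):Fin p) = x + 1 + 1 by push_cast; ring] at this

lemma F3 (hp : 7 ≤ p) (x : Fin p) : x + 1 + 1 + 1 ≠ x := by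
  have := fin_shift_ne hp 3 (by norm_num) (by omega) x
  rwa [show x + ((3:ℕ):Fin p) = x + 1 + 1 + 1 by push_cast; ring] at this

lemma F4 (hp : 7 ≤ p) (x : Fin p) : x + 1 + 1 + 1 + 1 ≠ x := by
  have := fin_shift_ne hp 4 (by norm_num) (by omega) x
  rwa [show x + ((4:ℕ):Fin p) = x + 1 + 1 + 1 + 1 by push_cast; ring] at this

lemma F5 (hp : 7 ≤ p) (x : Fin p) : x + 1 + 1 + 1 + 1 + 1 ≠ x := by
  have := fin_shift_ne hp 5 (by norm_num) (by omega) x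
  rwa [show x + ((5:ℕ):Fin p) = x + 1 + 1 + 1 + 1 + 1 by push_cast; ring] at this

end Helpers

lemma no_bull {V : Type*} {G : SimpleGraph V} (hbull : ¬ Nonempty (bull ↪g G))
    {x0 x1 x2 x3 x4 : V}
    (e01 : G.Adj x0 x1) (e12 : G.Adj x1 x2) (e23 : G.Adj x2 x3) (e34 : G.Adj x3 x4)
    (e13 : G.Adj x1 x3)
    (n02 : ¬ G.Adj x0 x2) (n03 : ¬ G.Adj x0 x3) (n04 : ¬ G.Adj x0 x4)
    (n14 : ¬ G.Adj x1 x4) (n24 : ¬ G.Adj x2 x4)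
    (d02 : x0 ≠ x2) (d03 : x0 ≠ x3) (d04 : x0 ≠ x4) (d14 : x1 ≠ x4) (d24 : x2 ≠ x4) :
    False := by
  apply hbull
  refine ⟨⟨⟨![x0, x1, x2, x3, x4], ?_⟩, ?_⟩⟩
  · intro a b hab
    fin_cases a <;> fin_cases b <;>
      simp_all [e01.ne, e12.ne, e23.ne, e34.ne, e13.ne,
        e01.ne', e12.ne', e23.ne', e34.ne', e13.ne', d02.symm, d03.symm, d04.symm,
        d14.symm, d24.symm]
  · intro a b
    fin_cases a <;> fin_cases b <;>
      simp [bull, SimpleGraph.fromRel] <;>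
      first
        | exact e01 | exact e12 | exact e23 | exact e34 | exact e13
        | exact e01.symm | exact e12.symm | exact e23.symm | exact e34.symm | exact e13.symm
        | exact G.irrefl
        | exact fun h => n02 h | exact fun h => n03 h | exact fun h => n04 h
        | exact fun h => n14 h | exact fun h => n24 h
        | exact fun h => n02 h.symm | exact fun h => n03 h.symm | exact fun h => n04 h.symm
        | exact fun h => n14 h.symm | exact fun h => n24 h.symm

lemma no_chair {V : Type*} {G : SimpleGraph V} (hchair : ¬ Nonempty (chair ↪g G))
    {x0 x1 x2 x3 x4 : V}
    (e01 : G.Adj x0 x1) (e02 : G.Adj x0 x2) (e03 : G.Adj x0 x3) (e34 : G.Adj x3 x4)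
    (n04 : ¬ G.Adj x0 x4) (n12 : ¬ G.Adj x1 x2) (n13 : ¬ G.Adj x1 x3)
    (n14 : ¬ G.Adj x1 x4) (n23 : ¬ G.Adj x2 x3) (n24 : ¬ G.Adj x2 x4)
    (d04 : x0 ≠ x4) (d12 : x1 ≠ x2) (d13 : x1 ≠ x3) (d14 : x1 ≠ x4)
    (d23 : x2 ≠ x3) (d24 : x2 ≠ x4) :
    False := by
  apply hchair
  refine ⟨⟨⟨![x0, x1, x2, x3, x4], ?_⟩, ?_⟩⟩
  · intro a b hab
    fin_cases a <;> fin_cases b <;>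
      simp_all [e01.ne, e02.ne, e03.ne, e34.ne,
        e01.ne', e02.ne', e03.ne', e34.ne', d04.symm, d12.symm, d13.symm,
        d14.symm, d23.symm, d24.symm]
  · intro a b
    fin_cases a <;> fin_cases b <;>
      simp [chair, SimpleGraph.fromRel] <;>
      first
        | exact e01 | exact e02 | exact e03 | exact e34
        | exact e01.symm | exact e02.symm | exact e03.symm | exact e34.symm
        | exact G.irrefl
        | exact fun h => n04 h | exact fun h => n12 h | exact fun h => n13 h
        | exact fun h => n14 h | exact fun h => n23 h | exact fun h => n24 h
        | exact fun h => n04 h.symm | exact fun h => n12 h.symm | exact fun h => n13 h.symm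
        | exact fun h => n14 h.symm | exact fun h => n23 h.symm | exact fun h => n24 h.symm

theorem cycle_with_A_is_clique_expansion {V : Type*} [Fintype V] (G : SimpleGraph V)
    (hbull : ¬ Nonempty (bull ↪g G)) (hchair : ¬ Nonempty (chair ↪g G))
    (p : ℕ) [NeZero p] (hodd : Odd p) (hp : 7 ≤ p)
    (v : Fin p → V) (hvinj : Function.Injective v)
    (hv : ∀ i j : Fin p, G.Adj (v i) (v j) ↔ (cycleG p).Adj i j) :
    (∀ i : Fin p, ∀ x ∈ insert (v i) (AsetI G v i), ∀ y ∈ insert (v i) (AsetI G v i),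
      x ≠ y → G.Adj x y) ∧
    (∀ i : Fin p, ∀ x ∈ insert (v i) (AsetI G v i),
      ∀ y ∈ insert (v (i + 1)) (AsetI G v (i + 1)), G.Adj x y) ∧
    (∀ i j : Fin p, j ≠ i - 1 → j ≠ i → j ≠ i + 1 →
      ∀ x ∈ insert (v i) (AsetI G v i), ∀ y ∈ insert (v j) (AsetI G v j), ¬ G.Adj x y) ∧
    Nonempty ((G.induce (Set.range v ∪ Aset G v)) ≃g
      cliqueExpansion p (fun i => 1 + (AsetI G v i).ncard)) := by
  classical
  have adjVV : ∀ i j : Fin p, G.Adj (v i) (v j) ↔ (i ≠ j ∧ (i + 1 = j ∨ j + 1 = i)) := hv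
  have adjSucc : ∀ i : Fin p, G.Adj (v i) (v (i + 1)) :=
    fun i => (adjVV i (i + 1)).2 ⟨Ne.symm (F1 hp i), Or.inl rfl⟩
  have keyA : ∀ (i : Fin p) (w : V), w ∈ AsetI G v i →
      ∀ j, G.Adj w (v j) ↔ (j + 1 = i ∨ j = i ∨ j = i + 1) := by
    intro i w hw j
    rw [hw.2 j, eq_sub_iff_add_eq]
  have keyNe : ∀ (i : Fin p) (w : V), w ∈ AsetI G v i → ∀ j, w ≠ v j :=
    fun i w hw => hw.1
  have memUniq : ∀ (i j : Fin p) (w : V), w ∈ AsetI G v i → w ∈ AsetI G v j → i = j := by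
    intro i j w hwi hwj
    have h1 : G.Adj w (v i) := (keyA i w hwi i).2 (Or.inr (Or.inl rfl))
    rcases (keyA j w hwj i).1 h1 with h | h | h
    · exfalso
      subst h
      have h3 : G.Adj w (v (i + 1 + 1)) := (keyA (i + 1) w hwj (i + 1 + 1)).2 (Or.inr (Or.inr rfl))
      rcases (keyA i w hwi (i + 1 + 1)).1 h3 with h4 | h4 | h4
      · exact F3 hp i h4
      · exact F2 hp i h4
      · exact F1 hp (i + 1) h4
    · exact h
    · exfalso
      subst h
      have h3 : G.Adj w (v (j + 1 + 1)) := (keyA (j + 1) w hwi (j + 1 + 1)).2 (Or.inr (Or.inr rfl))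
      rcases (keyA j w hwj (j + 1 + 1)).1 h3 with h4 | h4 | h4
      · exact F3 hp j h4
      · exact F2 hp j h4
      · exact F1 hp (j + 1) h4
  -- no adjacency between A_{k+1} and A_{k+3}
  have partC_bull : ∀ (k : Fin p) (w w' : V), w ∈ AsetI G v (k + 1) →
      w' ∈ AsetI G v (k + 1 + 1 + 1) → ¬ G.Adj w w' := by
    intro k w w' hw hw' hadj
    refine no_bull hbull (x0 := v k) (x1 := w) (x2 := v (k + 1 + 1)) (x3 := w')
      (x4 := v (k + 1 + 1 + 1 + 1)) ?_ ?_ ?_ ?_ hadj ?_ ?_ ?_ ?_ ?_ ?_ ?_ ?_ ?_ ?_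
    · exact ((keyA _ w hw k).2 (Or.inl rfl)).symm
    · exact (keyA _ w hw (k + 1 + 1)).2 (Or.inr (Or.inr rfl))
    · exact ((keyA _ w' hw' (k + 1 + 1)).2 (Or.inl rfl)).symm
    · exact (keyA _ w' hw' (k + 1 + 1 + 1 + 1)).2 (Or.inr (Or.inr rfl))
    · intro h
      rcases ((adjVV _ _).1 h).2 with h' | h'
      · exact F1 hp (k + 1) h'.symm
      · exact F3 hp k h'
    · intro h
      rcases (keyA _ w' hw' k).1 h.symm with h' | h' | h'
      · exact F2 hp (k + 1) h'.symm
      · exact F3 hp k h'.symm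
      · exact F4 hp k h'.symm
    · intro h
      rcases ((adjVV _ _).1 h).2 with h' | h'
      · exact F3 hp (k + 1) h'.symm
      · exact F5 hp k h'
    · intro h
      rcases (keyA _ w hw (k + 1 + 1 + 1 + 1)).1 h with h' | h' | h'
      · exact F4 hp (k + 1) h'
      · exact F3 hp (k + 1) h'
      · exact F2 hp (k + 1 + 1) h'
    · intro h
      rcases ((adjVV _ _).1 h).2 with h' | h'
      · exact F1 hp (k + 1 + 1 + 1) h'.symm
      · exact F3 hp (k + 1 + 1) h'
    · exact hvinj.ne (Ne.symm (F2 hp k))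
    · exact Ne.symm (keyNe _ w' hw' k)
    · exact hvinj.ne (Ne.symm (F4 hp k))
    · exact keyNe _ w hw _
    · exact hvinj.ne (Ne.symm (F2 hp (k + 1 + 1)))
  -- full adjacency between A_{k+2} and A_{k+3}
  have partB_bull : ∀ (k : Fin p) (w w' : V), w ∈ AsetI G v (k + 1 + 1) →
      w' ∈ AsetI G v (k + 1 + 1 + 1) → G.Adj w w' := by
    intro k w w' hw hw'
    by_contra hn
    refine no_bull hbull (x0 := v k) (x1 := v (k + 1)) (x2 := w) (x3 := v (k + 1 + 1))
      (x4 := w') (adjSucc k) ?_ ?_ ?_ (adjSucc (k + 1)) ?_ ?_ ?_ ?_ hn ?_ ?_ ?_ ?_ ?_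
    · exact ((keyA _ w hw (k + 1)).2 (Or.inl rfl)).symm
    · exact (keyA _ w hw (k + 1 + 1)).2 (Or.inr (Or.inl rfl))
    · exact ((keyA _ w' hw' (k + 1 + 1)).2 (Or.inl rfl)).symm
    · intro h
      rcases (keyA _ w hw k).1 h.symm with h' | h' | h'
      · exact F1 hp (k + 1) h'.symm
      · exact F2 hp k h'.symm
      · exact F3 hp k h'.symm
    · intro h
      rcases ((adjVV _ _).1 h).2 with h' | h'
      · exact F1 hp (k + 1) h'.symm
      · exact F3 hp k h'
    · intro h
      rcases (keyA _ w' hw' k).1 h.symm with h' | h' | h'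
      · exact F2 hp (k + 1) h'.symm
      · exact F3 hp k h'.symm
      · exact F4 hp k h'.symm
    · intro h
      rcases (keyA _ w' hw' (k + 1)).1 h.symm with h' | h' | h'
      · exact F1 hp (k + 1 + 1) h'.symm
      · exact F2 hp (k + 1) h'.symm
      · exact F3 hp (k + 1) h'.symm
    · exact Ne.symm (keyNe _ w hw k)
    · exact hvinj.ne (Ne.symm (F2 hp k))
    · exact Ne.symm (keyNe _ w' hw' k)
    · exact Ne.symm (keyNe _ w' hw' (k + 1))
    · intro h
      exact F1 hp (k + 1 + 1) (memUniq _ _ w hw (h ▸ hw')).symm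
  -- A_i ∪ {v i} is a clique
  have partA_clique : ∀ (i : Fin p) (w w' : V), w ∈ AsetI G v i → w' ∈ AsetI G v i →
      w ≠ w' → G.Adj w w' := by
    intro i w w' hw hw' hne
    by_contra hn
    refine no_chair hchair (x0 := v (i + 1)) (x1 := w) (x2 := w') (x3 := v (i + 1 + 1))
      (x4 := v (i + 1 + 1 + 1)) ?_ ?_ (adjSucc (i + 1)) (adjSucc (i + 1 + 1))
      ?_ hn ?_ ?_ ?_ ?_ ?_ hne ?_ ?_ ?_ ?_
    · exact ((keyA _ w hw (i + 1)).2 (Or.inr (Or.inr rfl))).symm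
    · exact ((keyA _ w' hw' (i + 1)).2 (Or.inr (Or.inr rfl))).symm
    · intro h
      rcases ((adjVV _ _).1 h).2 with h' | h'
      · exact F1 hp (i + 1 + 1) h'.symm
      · exact F3 hp (i + 1) h'
    · intro h
      rcases (keyA _ w hw (i + 1 + 1)).1 h with h' | h' | h'
      · exact F3 hp i h'
      · exact F2 hp i h'
      · exact F1 hp (i + 1) h'
    · intro h
      rcases (keyA _ w hw (i + 1 + 1 + 1)).1 h with h' | h' | h'
      · exact F4 hp i h'
      · exact F3 hp i h'
      · exact F2 hp (i + 1) h'
    · intro h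
      rcases (keyA _ w' hw' (i + 1 + 1)).1 h with h' | h' | h'
      · exact F3 hp i h'
      · exact F2 hp i h'
      · exact F1 hp (i + 1) h'
    · intro h
      rcases (keyA _ w' hw' (i + 1 + 1 + 1)).1 h with h' | h' | h'
      · exact F4 hp i h'
      · exact F3 hp i h'
      · exact F2 hp (i + 1) h'
    · exact hvinj.ne (Ne.symm (F2 hp (i + 1)))
    · exact keyNe _ w hw _
    · exact keyNe _ w hw _
    · exact keyNe _ w' hw' _
    · exact keyNe _ w' hw' _
  -- far case: chair
  have partC_chair : ∀ (k j : Fin p) (w w' : V), w ∈ AsetI G v (k + 1) →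
      w' ∈ AsetI G v j → j ≠ k → j ≠ k + 1 → j ≠ k + 1 + 1 → j ≠ k + 1 + 1 + 1 →
      k ≠ j + 1 → ¬ G.Adj w w' := by
    intro k j w w' hw hw' hjk hjk1 hjk2 hjk3 hkj1 hadj
    refine no_chair hchair (x0 := w) (x1 := v k) (x2 := v (k + 1 + 1)) (x3 := w')
      (x4 := v j) ?_ ?_ hadj ?_ ?_ ?_ ?_ ?_ ?_ ?_ ?_ ?_ ?_ ?_ ?_ ?_
    · exact (keyA _ w hw k).2 (Or.inl rfl)
    · exact (keyA _ w hw (k + 1 + 1)).2 (Or.inr (Or.inr rfl))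
    · exact (keyA _ w' hw' j).2 (Or.inr (Or.inl rfl))
    · intro h
      rcases (keyA _ w hw j).1 h with h' | h' | h'
      · exact hjk (add_right_cancel h')
      · exact hjk1 h'
      · exact hjk2 h'
    · intro h
      rcases ((adjVV _ _).1 h).2 with h' | h'
      · exact F1 hp (k + 1) h'.symm
      · exact F3 hp k h'
    · intro h
      rcases (keyA _ w' hw' k).1 h.symm with h' | h' | h'
      · exact hjk1 h'.symm
      · exact hjk h'.symm
      · exact hkj1 h'
    · intro h
      rcases ((adjVV _ _).1 h).2 with h' | h'
      · exact hjk1 h'.symm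
      · exact hkj1 h'.symm
    · intro h
      rcases (keyA _ w' hw' (k + 1 + 1)).1 h.symm with h' | h' | h'
      · exact hjk3 h'.symm
      · exact hjk2 h'.symm
      · exact hjk1 (add_right_cancel h'.symm)
    · intro h
      rcases ((adjVV _ _).1 h).2 with h' | h'
      · exact hjk3 h'.symm
      · exact hjk1 (add_right_cancel h')
    · exact keyNe _ w hw j
    · exact hvinj.ne (Ne.symm (F2 hp k))
    · exact Ne.symm (keyNe _ w' hw' k)
    · exact hvinj.ne fun h => hjk h.symm
    · exact Ne.symm (keyNe _ w' hw' _)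
    · exact hvinj.ne fun h => hjk2 h.symm
  have hA : ∀ i : Fin p, ∀ x ∈ insert (v i) (AsetI G v i), ∀ y ∈ insert (v i) (AsetI G v i),
      x ≠ y → G.Adj x y := by
    intro i x hx y hy hxy
    rcases Set.mem_insert_iff.1 hx with rfl | hx
    · rcases Set.mem_insert_iff.1 hy with rfl | hy
      · exact absurd rfl hxy
      · exact ((keyA i y hy i).2 (Or.inr (Or.inl rfl))).symm
    · rcases Set.mem_insert_iff.1 hy with rfl | hy
      · exact (keyA i x hx i).2 (Or.inr (Or.inl rfl))
      · exact partA_clique i x y hx hy hxy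
  have hB : ∀ i : Fin p, ∀ x ∈ insert (v i) (AsetI G v i),
      ∀ y ∈ insert (v (i + 1)) (AsetI G v (i + 1)), G.Adj x y := by
    intro i x hx y hy
    rcases Set.mem_insert_iff.1 hx with rfl | hx
    · rcases Set.mem_insert_iff.1 hy with rfl | hy
      · exact adjSucc i
      · exact ((keyA _ y hy i).2 (Or.inl rfl)).symm
    · rcases Set.mem_insert_iff.1 hy with rfl | hy
      · exact (keyA _ x hx (i + 1)).2 (Or.inr (Or.inr rfl))
      · obtain ⟨k, rfl⟩ : ∃ k : Fin p, i = k + 1 + 1 :=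
          ⟨i - 1 - 1, by rw [sub_add_cancel, sub_add_cancel]⟩
        exact partB_bull k x y hx hy
  have hC : ∀ i j : Fin p, j ≠ i - 1 → j ≠ i → j ≠ i + 1 →
      ∀ x ∈ insert (v i) (AsetI G v i), ∀ y ∈ insert (v j) (AsetI G v j), ¬ G.Adj x y := by
    intro i j hj1 hj2 hj3 x hx y hy hadj
    have hj1' : j + 1 ≠ i := fun h => hj1 (eq_sub_iff_add_eq.2 h)
    rcases Set.mem_insert_iff.1 hx with rfl | hx
    · rcases Set.mem_insert_iff.1 hy with rfl | hy
      · rcases ((adjVV _ _).1 hadj).2 with h | h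
        · exact hj3 h.symm
        · exact hj1' h
      · rcases (keyA _ y hy i).1 hadj.symm with h | h | h
        · exact hj3 h.symm
        · exact hj2 h.symm
        · exact hj1' h.symm
    · rcases Set.mem_insert_iff.1 hy with rfl | hy
      · rcases (keyA _ x hx j).1 hadj with h | h | h
        · exact hj1' h
        · exact hj2 h
        · exact hj3 h
      · by_cases hc1 : j = i + 1 + 1
        · subst hc1
          obtain ⟨k, rfl⟩ : ∃ k : Fin p, i = k + 1 := ⟨i - 1, (sub_add_cancel i 1).symm⟩
          exact partC_bull k x y hx hy hadj
        · by_cases hc2 : i = j + 1 + 1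
          · subst hc2
            obtain ⟨k, rfl⟩ : ∃ k : Fin p, j = k + 1 := ⟨j - 1, (sub_add_cancel j 1).symm⟩
            exact partC_bull k y x hy hx hadj.symm
          · obtain ⟨k, hk⟩ : ∃ k : Fin p, i = k + 1 := ⟨i - 1, (sub_add_cancel i 1).symm⟩
            subst hk
            refine partC_chair k j x y hx hy ?_ hj2 hj3 hc1 ?_ hadj
            · intro h
              exact hj1 (h.trans (add_sub_cancel_right k 1).symm)
            · intro h
              exact hc2 (by rw [h])
  refine ⟨hA, hB, hC, ?_⟩
  set S : Fin p → Set V := fun i => insert (v i) (AsetI G v i) with hS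
  have main : ∀ (i j : Fin p) (x y : V), x ∈ S i → y ∈ S j →
      (G.Adj x y ↔ (x ≠ y ∧ (i = j ∨ i + 1 = j ∨ j + 1 = i))) := by
    intro i j x y hx hy
    constructor
    · intro h
      refine ⟨h.ne, ?_⟩
      by_contra hcon
      push_neg at hcon
      obtain ⟨c1, c2, c3⟩ := hcon
      refine hC i j ?_ (fun hh => c1 hh.symm) (fun hh => c2 hh.symm) x hx y hy h
      intro hh
      exact c3 (by rw [hh]; exact sub_add_cancel i 1)
    · rintro ⟨hne, rfl | h | h⟩
      · exact hA _ x hx y hy hne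
      · exact hB _ x hx y (by rw [h]; exact hy)
      · exact (hB _ y hy x (by rw [h]; exact hx)).symm
  have hdisj : Pairwise (Function.onFun Disjoint S) := by
    intro i j hij
    rw [Function.onFun, Set.disjoint_left]
    intro x hxi hxj
    rcases Set.mem_insert_iff.1 hxi with rfl | hxi
    · rcases Set.mem_insert_iff.1 hxj with heq | hxj
      · exact hij (hvinj heq)
      · exact hxj.1 i rfl
    · rcases Set.mem_insert_iff.1 hxj with heq | hxj
      · exact hxi.1 j heq
      · exact hij (memUniq i j x hxi hxj)
  have hU : (Set.range v ∪ Aset G v) = ⋃ i, S i := by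
    ext x
    simp only [Set.mem_union, Set.mem_range, Aset, Set.mem_iUnion, hS, Set.mem_insert_iff]
    constructor
    · rintro (⟨i, rfl⟩ | ⟨i, hi⟩)
      · exact ⟨i, Or.inl rfl⟩
      · exact ⟨i, Or.inr hi⟩
    · rintro ⟨i, rfl | hi⟩
      · exact Or.inl ⟨i, rfl⟩
      · exact Or.inr ⟨i, hi⟩
  haveI hFt : ∀ i : Fin p, Fintype ↥(S i) := fun i => (Set.toFinite (S i)).fintype
  have hcard : ∀ i : Fin p, Fintype.card ↥(S i) = 1 + (AsetI G v i).ncard := by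
    intro i
    have hvn : v i ∉ AsetI G v i := fun h => h.1 i rfl
    have h1 : (S i).ncard = 1 + (AsetI G v i).ncard := by
      show (insert (v i) (AsetI G v i)).ncard = _
      rw [Set.ncard_insert_of_notMem hvn (Set.toFinite _), Nat.add_comm]
    rw [← h1, Set.ncard_eq_toFinset_card', Set.toFinset_card]
  let e : ∀ i : Fin p, ↥(S i) ≃ Fin (1 + (AsetI G v i).ncard) :=
    fun i => Fintype.equivFinOfCardEq (hcard i)
  let E : ↥(Set.range v ∪ Aset G v) ≃ (Σ i : Fin p, Fin (1 + (AsetI G v i).ncard)) :=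
    (Equiv.setCongr hU).trans ((Set.unionEqSigmaOfDisjoint hdisj).trans
      (Equiv.sigmaCongrRight e))
  have hmem : ∀ x : ↥(Set.range v ∪ Aset G v), (x : V) ∈ S ((E x).1) := by
    intro x
    have h1 : (E x).1 = ((Set.unionEqSigmaOfDisjoint hdisj) (Equiv.setCongr hU x)).1 := rfl
    rw [h1]
    set z := (Set.unionEqSigmaOfDisjoint hdisj) (Equiv.setCongr hU x) with hz
    have h2 : (Set.unionEqSigmaOfDisjoint hdisj).symm z = Equiv.setCongr hU x :=
      Equiv.symm_apply_apply _ _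
    have h3 : ((Set.unionEqSigmaOfDisjoint hdisj).symm z : V) = ↑(z.2) := rfl
    have h4 : (x : V) = ↑(z.2) := by rw [← h3, h2]; rfl
    rw [h4]
    exact z.2.2
  refine ⟨⟨E, ?_⟩⟩
  intro a b
  show ((E a ≠ E b) ∧ ((E a).1 = (E b).1 ∨ (E a).1 + 1 = (E b).1 ∨ (E b).1 + 1 = (E a).1))
      ↔ G.Adj ↑a ↑b
  rw [main ((E a).1) ((E b).1) ↑a ↑b (hmem a) (hmem b)]
  constructor
  · rintro ⟨hne, hc⟩
    exact ⟨fun h => hne (congrArg E (Subtype.ext h)), hc⟩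
  · rintro ⟨hne, hc⟩
    exact ⟨fun h => hne (congrArg Subtype.val (E.injective h)), hc⟩
end

section
/- Let G be a (bull, chair)-free graph containing an induced odd cycle Q = v_1 v_2 … v_p v_1 of length p ≥ 7 (p odd). Let A be the set of vertices w ∉ Q whose neighborhood in Q is exactly {v_{i-1}, v_i, v_{i+1}} for some i (modulo p), and let D be the set of vertices w ∉ Q adjacent to every vertex of Q. Then no vertex of A has a neighbor in V(G) ∖ (Q ∪ A ∪ D); in particular, D separates Q from G ∖ (Q ∪ A ∪ D). -/
open SimpleGraph Finset

section AuxEmbed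

lemma embed_mk {V : Type*} {G : SimpleGraph V} {W : Type*} {H : SimpleGraph W}
    (f : W → V) (hinj : Function.Injective f)
    (h : ∀ a b, G.Adj (f a) (f b) ↔ H.Adj a b) : Nonempty (H ↪g G) :=
  ⟨⟨⟨f, hinj⟩, h _ _⟩⟩

lemma bull_embed_s13 {V : Type*} {G : SimpleGraph V} (x0 x1 x2 x3 x4 : V)
    (d01 : x0 ≠ x1) (d02 : x0 ≠ x2) (d03 : x0 ≠ x3) (d04 : x0 ≠ x4)
    (d12 : x1 ≠ x2) (d13 : x1 ≠ x3) (d14 : x1 ≠ x4)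
    (d23 : x2 ≠ x3) (d24 : x2 ≠ x4) (d34 : x3 ≠ x4)
    (e01 : G.Adj x0 x1) (e12 : G.Adj x1 x2) (e23 : G.Adj x2 x3) (e34 : G.Adj x3 x4)
    (e13 : G.Adj x1 x3)
    (n02 : ¬G.Adj x0 x2) (n03 : ¬G.Adj x0 x3) (n04 : ¬G.Adj x0 x4)
    (n14 : ¬G.Adj x1 x4) (n24 : ¬G.Adj x2 x4) : Nonempty (bull ↪g G) := by
  apply embed_mk ![x0,x1,x2,x3,x4]
  · intro a b hab
    fin_cases a <;> fin_cases b <;> simp_all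
  · intro a b
    fin_cases a <;> fin_cases b <;>
      simp_all [bull, SimpleGraph.fromRel_adj, G.adj_comm, Fin.ext_iff, -Fin.val_eq_zero_iff] <;> decide

lemma chair_embed_s13 {V : Type*} {G : SimpleGraph V} (x0 x1 x2 x3 x4 : V)
    (d01 : x0 ≠ x1) (d02 : x0 ≠ x2) (d03 : x0 ≠ x3) (d04 : x0 ≠ x4)
    (d12 : x1 ≠ x2) (d13 : x1 ≠ x3) (d14 : x1 ≠ x4)
    (d23 : x2 ≠ x3) (d24 : x2 ≠ x4) (d34 : x3 ≠ x4)
    (e01 : G.Adj x0 x1) (e02 : G.Adj x0 x2) (e03 : G.Adj x0 x3) (e34 : G.Adj x3 x4)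
    (n04 : ¬G.Adj x0 x4)
    (n12 : ¬G.Adj x1 x2) (n13 : ¬G.Adj x1 x3) (n14 : ¬G.Adj x1 x4)
    (n23 : ¬G.Adj x2 x3) (n24 : ¬G.Adj x2 x4) : Nonempty (chair ↪g G) := by
  apply embed_mk ![x0,x1,x2,x3,x4]
  · intro a b hab
    fin_cases a <;> fin_cases b <;> simp_all
  · intro a b
    fin_cases a <;> fin_cases b <;>
      simp_all [chair, SimpleGraph.fromRel_adj, G.adj_comm, Fin.ext_iff, -Fin.val_eq_zero_iff] <;> decide

end AuxEmbed

section AuxArith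

open Fin.CommRing Fin.NatCast

lemma cast_nz {p : ℕ} [NeZero p] {c : ℕ} (h1 : 0 < c) (h2 : c < p) :
    ((c : ℕ) : Fin p) ≠ 0 := by
  intro h
  have h2' := congrArg Fin.val h
  rw [Fin.val_natCast, Nat.mod_eq_of_lt h2, Fin.val_zero] at h2'
  omega

lemma offne {p : ℕ} [NeZero p] (hp : 7 ≤ p) (c : ℕ) (h1 : 0 < c) (h2 : c < p)
    {a b : Fin p} (h : a - b = ((c : ℕ) : Fin p)) : a ≠ b := by
  intro e
  apply cast_nz h1 h2
  rw [← h, e, sub_self]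

end AuxArith

section AuxTools

open Fin.CommRing Fin.NatCast

lemma vne' {V : Type*} {p : ℕ} {v : Fin p → V} (hvinj : Function.Injective v)
    {a b : Fin p} (h : a ≠ b) : v a ≠ v b :=
  fun e => h (hvinj e)

lemma adjv {V : Type*} {G : SimpleGraph V} {p : ℕ} [NeZero p] {v : Fin p → V}
    (hp : 7 ≤ p)
    (hv : ∀ i j : Fin p, G.Adj (v i) (v j) ↔ (cycleG p).Adj i j)
    {a b : Fin p} (h : a + 1 = b) : G.Adj (v a) (v b) := by
  have hne : a ≠ b := by
    intro e
    subst e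
    have h0 : ((1 : ℕ) : Fin p) = 0 := by push_cast; linear_combination h
    exact cast_nz (p := p) (c := 1) one_pos (by omega) h0
  exact (hv a b).mpr ⟨hne, Or.inl h⟩

lemma nadjv {V : Type*} {G : SimpleGraph V} {p : ℕ} [NeZero p] {v : Fin p → V}
    (hv : ∀ i j : Fin p, G.Adj (v i) (v j) ↔ (cycleG p).Adj i j)
    {a b : Fin p} (h1 : a + 1 ≠ b) (h2 : b + 1 ≠ a) : ¬ G.Adj (v a) (v b) :=
  fun h => (((hv a b).mp h).2).elim h1 h2

variable {V : Type*} {G : SimpleGraph V} {p : ℕ} [NeZero p] {v : Fin p → V} {u : V}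

/-- Bull on `{v (j-1), v j, u, v (j+1), v (j+2)}`. -/
lemma tool_T6 (hbull : ¬ Nonempty (bull ↪g G)) (hp : 7 ≤ p)
    (hvinj : Function.Injective v)
    (hv : ∀ i j : Fin p, G.Adj (v i) (v j) ↔ (cycleG p).Adj i j)
    (hneu : ∀ j : Fin p, u ≠ v j)
    (j : Fin p) (h0 : G.Adj u (v j)) (h1 : G.Adj u (v (j+1)))
    (hm : ¬ G.Adj u (v (j-1))) (h2 : ¬ G.Adj u (v (j+2))) : False := by
  apply hbull
  refine bull_embed_s13 (v (j-1)) (v j) u (v (j+1)) (v (j+2))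
    (vne' hvinj (Ne.symm (offne hp 1 (by norm_num) (by omega) (by push_cast; ring))))
    (hneu _).symm
    (vne' hvinj (Ne.symm (offne hp 2 (by norm_num) (by omega) (by push_cast; ring))))
    (vne' hvinj (Ne.symm (offne hp 3 (by norm_num) (by omega) (by push_cast; ring))))
    (hneu _).symm
    (vne' hvinj (Ne.symm (offne hp 1 (by norm_num) (by omega) (by push_cast; ring))))
    (vne' hvinj (Ne.symm (offne hp 2 (by norm_num) (by omega) (by push_cast; ring))))
    (hneu _)
    (hneu _)
    (vne' hvinj (Ne.symm (offne hp 1 (by norm_num) (by omega) (by push_cast; ring))))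
    (adjv hp hv (by ring))
    h0.symm
    h1
    (adjv hp hv (by ring))
    (adjv hp hv rfl)
    (fun h => hm h.symm)
    (nadjv hv (Ne.symm (offne hp 1 (by norm_num) (by omega) (by push_cast; ring)))
      (offne hp 3 (by norm_num) (by omega) (by push_cast; ring)))
    (nadjv hv (Ne.symm (offne hp 2 (by norm_num) (by omega) (by push_cast; ring)))
      (offne hp 4 (by norm_num) (by omega) (by push_cast; ring)))
    (nadjv hv (Ne.symm (offne hp 1 (by norm_num) (by omega) (by push_cast; ring)))
      (offne hp 3 (by norm_num) (by omega) (by push_cast; ring)))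
    h2

/-- Chair on `{v j, u, v (j-1), v (j+1), v (j+2)}`. -/
lemma tool_T8 (hchair : ¬ Nonempty (chair ↪g G)) (hp : 7 ≤ p)
    (hvinj : Function.Injective v)
    (hv : ∀ i j : Fin p, G.Adj (v i) (v j) ↔ (cycleG p).Adj i j)
    (hneu : ∀ j : Fin p, u ≠ v j)
    (j : Fin p) (h0 : G.Adj u (v j)) (hm : ¬ G.Adj u (v (j-1)))
    (h1 : ¬ G.Adj u (v (j+1))) (h2 : ¬ G.Adj u (v (j+2))) : False := by
  apply hchair
  refine chair_embed_s13 (v j) u (v (j-1)) (v (j+1)) (v (j+2))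
    (hneu _).symm
    (vne' hvinj (offne hp 1 (by norm_num) (by omega) (by push_cast; ring)))
    (vne' hvinj (Ne.symm (offne hp 1 (by norm_num) (by omega) (by push_cast; ring))))
    (vne' hvinj (Ne.symm (offne hp 2 (by norm_num) (by omega) (by push_cast; ring))))
    (hneu _)
    (hneu _)
    (hneu _)
    (vne' hvinj (Ne.symm (offne hp 2 (by norm_num) (by omega) (by push_cast; ring))))
    (vne' hvinj (Ne.symm (offne hp 3 (by norm_num) (by omega) (by push_cast; ring))))
    (vne' hvinj (Ne.symm (offne hp 1 (by norm_num) (by omega) (by push_cast; ring))))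
    h0.symm
    ((adjv hp hv (show j - 1 + 1 = j by ring)).symm)
    (adjv hp hv rfl)
    (adjv hp hv (by ring))
    (nadjv hv (Ne.symm (offne hp 1 (by norm_num) (by omega) (by push_cast; ring)))
      (offne hp 3 (by norm_num) (by omega) (by push_cast; ring)))
    hm
    h1
    h2
    (nadjv hv (Ne.symm (offne hp 1 (by norm_num) (by omega) (by push_cast; ring)))
      (offne hp 3 (by norm_num) (by omega) (by push_cast; ring)))
    (nadjv hv (Ne.symm (offne hp 2 (by norm_num) (by omega) (by push_cast; ring)))
      (offne hp 4 (by norm_num) (by omega) (by push_cast; ring)))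

/-- Bull on `{v (j+2), v (j+1), v j, u, v a}`. -/
lemma tool_T9' (hbull : ¬ Nonempty (bull ↪g G)) (hp : 7 ≤ p)
    (hvinj : Function.Injective v)
    (hv : ∀ i j : Fin p, G.Adj (v i) (v j) ↔ (cycleG p).Adj i j)
    (hneu : ∀ j : Fin p, u ≠ v j)
    (j a : Fin p) (h0 : G.Adj u (v j)) (h1 : G.Adj u (v (j+1)))
    (h2 : ¬ G.Adj u (v (j+2))) (ha : G.Adj u (v a))
    (w1 : a ≠ j - 1) (w2 : a ≠ j) (w3 : a ≠ j + 1) (w5 : a ≠ j + 3) : False := by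
  have w4 : a ≠ j + 2 := fun e => h2 (e ▸ ha)
  apply hbull
  refine bull_embed_s13 (v (j+2)) (v (j+1)) (v j) u (v a)
    (vne' hvinj (offne hp 1 (by norm_num) (by omega) (by push_cast; ring)))
    (vne' hvinj (offne hp 2 (by norm_num) (by omega) (by push_cast; ring)))
    (hneu _).symm
    (vne' hvinj w4.symm)
    (vne' hvinj (offne hp 1 (by norm_num) (by omega) (by push_cast; ring)))
    (hneu _).symm
    (vne' hvinj w3.symm)
    (hneu _).symm
    (vne' hvinj w2.symm)
    (hneu _)
    ((adjv hp hv (by ring)).symm)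
    ((adjv hp hv rfl).symm)
    h0.symm
    ha
    h1.symm
    (nadjv hv (offne hp 3 (by norm_num) (by omega) (by push_cast; ring))
      (Ne.symm (offne hp 1 (by norm_num) (by omega) (by push_cast; ring))))
    (fun h => h2 h.symm)
    (nadjv hv (fun h => w5 (by linear_combination -h)) (fun h => w3 (by linear_combination h)))
    (nadjv hv (fun h => w4 (by linear_combination -h)) (fun h => w2 (by linear_combination h)))
    (nadjv hv (fun h => w3 (by linear_combination -h)) (fun h => w1 (by linear_combination h)))

end AuxTools

open Fin.CommRing Fin.NatCast

theorem A_has_no_outside_neighbors {V : Type*} (G : SimpleGraph V)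
    (hbull : ¬ Nonempty (bull ↪g G)) (hchair : ¬ Nonempty (chair ↪g G))
    (p : ℕ) [NeZero p] (hodd : Odd p) (hp : 7 ≤ p)
    (v : Fin p → V) (hvinj : Function.Injective v)
    (hv : ∀ i j : Fin p, G.Adj (v i) (v j) ↔ (cycleG p).Adj i j) :
    ∀ w ∈ Aset G v, ∀ u : V,
      u ∉ Set.range v → u ∉ Aset G v → u ∉ Dset G v → ¬ G.Adj w u := by
  intro w hw u huQ huA huD hadj
  obtain ⟨i, hwQ, hwN⟩ := Set.mem_iUnion.mp hw
  have hneu : ∀ j : Fin p, u ≠ v j := fun j h => huQ ⟨j, h.symm⟩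
  have huA' : ∀ J : Fin p,
      ¬ ((∀ j, u ≠ v j) ∧ ∀ m : Fin p, G.Adj u (v m) ↔ (m = J - 1 ∨ m = J ∨ m = J + 1)) :=
    fun J hJ => huA (Set.mem_iUnion.mpr ⟨J, hJ⟩)
  have huD' : ¬ ((∀ j, u ≠ v j) ∧ ∀ j : Fin p, G.Adj u (v j)) := huD
  -- Step 1: no two cyclically consecutive neighbors of u on the cycle
  have hpair : ∀ j : Fin p, G.Adj u (v j) → G.Adj u (v (j+1)) → False := by
    intro j hj hj1
    have key : ∀ k : ℕ,
        G.Adj u (v (j + ((k : ℕ) : Fin p))) ∧ G.Adj u (v (j + ((k : ℕ) : Fin p) + 1)) := by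
      intro k
      induction k with
      | zero => exact ⟨by simpa using hj, by simpa using hj1⟩
      | succ k ih =>
        obtain ⟨ih1, ih2⟩ := ih
        have e1 : j + (((k+1 : ℕ)) : Fin p) = (j + ((k : ℕ) : Fin p)) + 1 := by
          push_cast; ring
        rw [e1]
        refine ⟨ih2, ?_⟩
        generalize hJ : j + ((k : ℕ) : Fin p) = J at ih1 ih2 ⊢
        rw [show J + 1 + 1 = J + 2 by ring]
        by_contra hns
        by_cases hNm : G.Adj u (v (J - 1))
        · -- otherwise u would be in the set A
          have nJ4 : ¬ G.Adj u (v (J + 4)) := fun h =>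
            tool_T9' hbull hp hvinj hv hneu J (J+4) ih1 ih2 hns h
              (offne hp 5 (by norm_num) (by omega) (by push_cast; ring))
              (offne hp 4 (by norm_num) (by omega) (by push_cast; ring))
              (offne hp 3 (by norm_num) (by omega) (by push_cast; ring))
              (offne hp 1 (by norm_num) (by omega) (by push_cast; ring))
          have nJ5 : ¬ G.Adj u (v (J + 5)) := fun h =>
            tool_T9' hbull hp hvinj hv hneu J (J+5) ih1 ih2 hns h
              (offne hp 6 (by norm_num) (by omega) (by push_cast; ring))
              (offne hp 5 (by norm_num) (by omega) (by push_cast; ring))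
              (offne hp 4 (by norm_num) (by omega) (by push_cast; ring))
              (offne hp 2 (by norm_num) (by omega) (by push_cast; ring))
          have nJ3 : ¬ G.Adj u (v (J + 3)) := by
            intro h
            refine tool_T8 hchair hp hvinj hv hneu (J+3) h ?_ ?_ ?_
            · rw [show J + 3 - 1 = J + 2 by ring]; exact hns
            · rw [show J + 3 + 1 = J + 4 by ring]; exact nJ4
            · rw [show J + 3 + 2 = J + 5 by ring]; exact nJ5
          refine huA' J ⟨hneu, fun m => ?_⟩
          constructor
          · intro hm'
            by_contra hnot
            push_neg at hnot
            obtain ⟨q1, q2, q3⟩ := hnot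
            have q5 : m ≠ J + 3 := fun e => nJ3 (e ▸ hm')
            exact (tool_T9' hbull hp hvinj hv hneu J m ih1 ih2 hns hm' q1 q2 q3 q5).elim
          · rintro (h' | h' | h') <;> rw [h']
            exacts [hNm, ih1, ih2]
        · exact tool_T6 hbull hp hvinj hv hneu J ih1 ih2 hNm hns
    have hall : ∀ m : Fin p, G.Adj u (v m) := by
      intro m
      have h := (key ((m - j).val)).1
      rwa [show j + (((m - j).val : ℕ) : Fin p) = m by rw [Fin.cast_val_eq_self]; ring] at h
    exact huD' ⟨hneu, hall⟩
  -- Step 2: u has some neighbor on the cycle (chair centered at w otherwise)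
  have hne_uw : w ≠ u := G.ne_of_adj hadj
  have hT1 : G.Adj u (v (i+1)) ∨ G.Adj u (v (i-1)) ∨ G.Adj u (v (i-2)) := by
    by_contra hcon
    push_neg at hcon
    obtain ⟨c1, c2, c3⟩ := hcon
    refine hchair (chair_embed_s13 w u (v (i+1)) (v (i-1)) (v (i-2))
      hne_uw (hwQ _) (hwQ _) (hwQ _) (hneu _) (hneu _) (hneu _)
      (vne' hvinj (offne hp 2 (by norm_num) (by omega) (by push_cast; ring)))
      (vne' hvinj (offne hp 3 (by norm_num) (by omega) (by push_cast; ring)))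
      (vne' hvinj (offne hp 1 (by norm_num) (by omega) (by push_cast; ring)))
      hadj
      ((hwN (i+1)).mpr (Or.inr (Or.inr rfl)))
      ((hwN (i-1)).mpr (Or.inl rfl))
      ((adjv hp hv (show i - 2 + 1 = i - 1 by ring)).symm)
      ?_ c1 c2 c3
      (nadjv hv (offne hp 3 (by norm_num) (by omega) (by push_cast; ring))
        (Ne.symm (offne hp 1 (by norm_num) (by omega) (by push_cast; ring))))
      (nadjv hv (offne hp 4 (by norm_num) (by omega) (by push_cast; ring))
        (Ne.symm (offne hp 2 (by norm_num) (by omega) (by push_cast; ring)))))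
    intro h
    rcases (hwN _).mp h with h' | h' | h'
    · exact (offne hp 1 (by norm_num) (by omega) (by push_cast; ring)) h'.symm
    · exact (offne hp 2 (by norm_num) (by omega) (by push_cast; ring)) h'.symm
    · exact (offne hp 3 (by norm_num) (by omega) (by push_cast; ring)) h'.symm
  obtain ⟨j0, hj0⟩ : ∃ j0 : Fin p, G.Adj u (v j0) := by
    rcases hT1 with h | h | h
    exacts [⟨_, h⟩, ⟨_, h⟩, ⟨_, h⟩]
  -- Step 3: all even translates of j0 are neighbors; with p odd this is absurd
  have step : ∀ k : ℕ, G.Adj u (v (j0 + ((2 * k : ℕ) : Fin p))) := by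
    intro k
    induction k with
    | zero => simpa using hj0
    | succ k ih =>
      have e : j0 + ((2 * (k+1) : ℕ) : Fin p) = (j0 + ((2 * k : ℕ) : Fin p)) + 2 := by
        push_cast; ring
      rw [e]
      generalize hM : j0 + ((2 * k : ℕ) : Fin p) = M at ih ⊢
      have hm1 : ¬ G.Adj u (v (M + 1)) := fun h => hpair M ih h
      have hmm : ¬ G.Adj u (v (M - 1)) := fun h =>
        hpair (M - 1) h (by rw [show M - 1 + 1 = M by ring]; exact ih)
      by_contra hns
      exact tool_T8 hchair hp hvinj hv hneu M ih hmm hm1 hns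
  have hfin : G.Adj u (v (j0 + 1)) := by
    have h := step ((p+1)/2)
    have hn : (2 * ((p+1)/2) : ℕ) = p + 1 := by
      obtain ⟨m, hm⟩ := hodd; omega
    rwa [show j0 + ((2 * ((p+1)/2) : ℕ) : Fin p) = j0 + 1 by
      rw [hn]; push_cast; simp [Fin.natCast_self]] at h
  exact hpair j0 hj0 hfin
end

section
/- Let G be a (bull, chair)-free graph containing an induced odd cycle Q = v_1 v_2 … v_p v_1 of length p ≥ 7 (p odd). Let A be the set of vertices w ∉ Q whose neighborhood in Q is exactly {v_{i-1}, v_i, v_{i+1}} for some i (modulo p), and let D be the set of vertices w ∉ Q adjacent to every vertex of Q. If a vertex w ∈ D has a neighbor in a connected component C of the graph G − (Q ∪ A ∪ D), then w is adjacent to every vertex of C. -/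
open SimpleGraph Finset

open Fin.NatCast Fin.CommRing

section AuxEmb
variable {V : Type*} {G : SimpleGraph V}
 {G : SimpleGraph V}

lemma chair_emb (x0 x1 x2 x3 x4 : V)
    (h01 : G.Adj x0 x1) (h02 : G.Adj x0 x2) (h03 : G.Adj x0 x3) (h34 : G.Adj x3 x4)
    (n12 : ¬G.Adj x1 x2) (n13 : ¬G.Adj x1 x3) (n14 : ¬G.Adj x1 x4)
    (n23 : ¬G.Adj x2 x3) (n24 : ¬G.Adj x2 x4) (n04 : ¬G.Adj x0 x4)
    (d12 : x1 ≠ x2) (d13 : x1 ≠ x3) (d14 : x1 ≠ x4)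
    (d23 : x2 ≠ x3) (d24 : x2 ≠ x4) (d04 : x0 ≠ x4) :
    Nonempty (chair ↪g G) := by
  have d01 := h01.ne
  have d02 := h02.ne
  have d03 := h03.ne
  have d34 := h34.ne
  refine ⟨⟨⟨![x0,x1,x2,x3,x4], ?_⟩, ?_⟩⟩
  · intro a b hab
    fin_cases a <;> fin_cases b <;> simp_all <;> first | rfl | (exfalso; simp_all)
  · intro a b
    change G.Adj (![x0,x1,x2,x3,x4] a) (![x0,x1,x2,x3,x4] b) ↔ _
    fin_cases a <;> fin_cases b <;>
      simp [chair, SimpleGraph.fromRel_adj, G.adj_comm] <;>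
      first
        | simp_all
        | (constructor <;> intro h <;> simp_all [G.adj_comm])



lemma bull_emb (x0 x1 x2 x3 x4 : V)
    (h01 : G.Adj x0 x1) (h12 : G.Adj x1 x2) (h23 : G.Adj x2 x3) (h34 : G.Adj x3 x4)
    (h13 : G.Adj x1 x3)
    (n02 : ¬G.Adj x0 x2) (n03 : ¬G.Adj x0 x3) (n04 : ¬G.Adj x0 x4)
    (n14 : ¬G.Adj x1 x4) (n24 : ¬G.Adj x2 x4)
    (d02 : x0 ≠ x2) (d03 : x0 ≠ x3) (d04 : x0 ≠ x4)
    (d14 : x1 ≠ x4) (d24 : x2 ≠ x4) :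
    Nonempty (bull ↪g G) := by
  have d01 := h01.ne
  have d12 := h12.ne
  have d23 := h23.ne
  have d34 := h34.ne
  have d13 := h13.ne
  refine ⟨⟨⟨![x0,x1,x2,x3,x4], ?_⟩, ?_⟩⟩
  · intro a b hab
    fin_cases a <;> fin_cases b <;> simp_all
  · intro a b
    change G.Adj (![x0,x1,x2,x3,x4] a) (![x0,x1,x2,x3,x4] b) ↔ _
    fin_cases a <;> fin_cases b <;>
      simp [bull, SimpleGraph.fromRel_adj, G.adj_comm] <;> simp_all

end AuxEmb

section
variable {V : Type*} {G : SimpleGraph V} {p : ℕ} [NeZero p] {v : Fin p → V} {x : V}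

lemma casteq (m n : ℕ) : ((m : Fin p) = (n : Fin p)) ↔ m % p = n % p := by
  rw [Fin.ext_iff]; simp [Fin.val_natCast]

lemma veqg (hvinj : Function.Injective v) (a : Fin p) (s t : ℕ) :
    v (a + (s : Fin p)) = v (a + (t : Fin p)) ↔ s % p = t % p := by
  rw [hvinj.eq_iff, add_right_inj, casteq]

lemma vadjg (hp : 7 ≤ p)
    (hv : ∀ i j : Fin p, G.Adj (v i) (v j) ↔ (cycleG p).Adj i j)
    (a : Fin p) (s t : ℕ) :
    G.Adj (v (a + (s : Fin p))) (v (a + (t : Fin p))) ↔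
      ((s+1) % p = t % p ∨ (t+1) % p = s % p) := by
  rw [hv]
  have h1 : a + (s : Fin p) + 1 = a + ((s+1 : ℕ) : Fin p) := by push_cast; ring
  have h2 : a + (t : Fin p) + 1 = a + ((t+1 : ℕ) : Fin p) := by push_cast; ring
  have hne : ∀ s' t' : ℕ, (s'+1) % p = t' % p → s' % p = t' % p → False := by
    intro s' t' h h'
    have : (s'+1) % p = s' % p := h.trans h'.symm
    have : p ∣ s' + 1 - s' := (Nat.modEq_iff_dvd' (by omega)).mp this.symm
    simp at this
    omega
  constructor
  · rintro ⟨hne', h | h⟩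
    · left; rw [h1, add_right_inj, casteq] at h; exact h
    · right; rw [h2, add_right_inj, casteq] at h; exact h
  · intro h
    refine ⟨?_, ?_⟩
    · intro hcontra
      rw [add_right_inj, casteq] at hcontra
      rcases h with h | h
      · exact hne _ _ h hcontra
      · exact hne _ _ h hcontra.symm
    · rcases h with h | h
      · left; rw [h1, add_right_inj, casteq]; exact h
      · right; rw [h2, add_right_inj, casteq]; exact h

lemma smalleq (hp : 7 ≤ p) (hvinj : Function.Injective v) (a : Fin p) (s t : ℕ)
    (hs : s ≤ 6) (ht : t ≤ 6) :
    v (a + (s : Fin p)) = v (a + (t : Fin p)) ↔ s = t := by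
  rw [veqg hvinj, Nat.mod_eq_of_lt (by omega), Nat.mod_eq_of_lt (by omega)]

lemma smalladj (hp : 7 ≤ p)
    (hv : ∀ i j : Fin p, G.Adj (v i) (v j) ↔ (cycleG p).Adj i j)
    (a : Fin p) (s t : ℕ) (hs : s ≤ 5) (ht : t ≤ 5) :
    G.Adj (v (a + (s : Fin p))) (v (a + (t : Fin p))) ↔ (t = s + 1 ∨ s = t + 1) := by
  rw [vadjg hp hv, Nat.mod_eq_of_lt (show s+1 < p by omega),
    Nat.mod_eq_of_lt (show t+1 < p by omega), Nat.mod_eq_of_lt (show s < p by omega),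
    Nat.mod_eq_of_lt (show t < p by omega)]
  omega

end

section Claims
variable {V : Type*} {G : SimpleGraph V} {p : ℕ} [NeZero p] {v : Fin p → V} {x : V}
variable (hp : 7 ≤ p) (hvinj : Function.Injective v)
  (hv : ∀ i j : Fin p, G.Adj (v i) (v j) ↔ (cycleG p).Adj i j)
  (hxv : ∀ j, x ≠ v j)

include hp hvinj hv hxv

/-- run of length exactly 2 -/
lemma c1 (hbull : ¬ Nonempty (bull ↪g G)) (a : Fin p)
    (h0 : ¬ G.Adj x (v (a + ((0:ℕ) : Fin p))))
    (h1 : G.Adj x (v (a + ((1:ℕ) : Fin p))))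
    (h2 : G.Adj x (v (a + ((2:ℕ) : Fin p))))
    (h3 : ¬ G.Adj x (v (a + ((3:ℕ) : Fin p)))) : False := by
  refine hbull (bull_emb (v (a + ((0:ℕ):Fin p))) (v (a + ((1:ℕ):Fin p))) x
      (v (a + ((2:ℕ):Fin p))) (v (a + ((3:ℕ):Fin p)))
    ((smalladj hp hv a 0 1 (by omega) (by omega)).mpr (by omega))
    h1.symm h2
    ((smalladj hp hv a 2 3 (by omega) (by omega)).mpr (by omega))
    ((smalladj hp hv a 1 2 (by omega) (by omega)).mpr (by omega))
    (fun h => h0 h.symm)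
    ((smalladj hp hv a 0 2 (by omega) (by omega)).not.mpr (by omega))
    ((smalladj hp hv a 0 3 (by omega) (by omega)).not.mpr (by omega))
    ((smalladj hp hv a 1 3 (by omega) (by omega)).not.mpr (by omega))
    h3
    (Ne.symm (hxv _))
    ((smalleq hp hvinj a 0 2 (by omega) (by omega)).not.mpr (by omega))
    ((smalleq hp hvinj a 0 3 (by omega) (by omega)).not.mpr (by omega))
    ((smalleq hp hvinj a 1 3 (by omega) (by omega)).not.mpr (by omega))
    (hxv _))

/-- isolated vertex, pendant to the right -/
lemma c2r (hchair : ¬ Nonempty (chair ↪g G)) (a : Fin p)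
    (h0 : ¬ G.Adj x (v (a + ((0:ℕ) : Fin p))))
    (h1 : G.Adj x (v (a + ((1:ℕ) : Fin p))))
    (h2 : ¬ G.Adj x (v (a + ((2:ℕ) : Fin p))))
    (h3 : ¬ G.Adj x (v (a + ((3:ℕ) : Fin p)))) : False := by
  -- chair 0=v_{a+1}, 1=x, 2=v_a, 3=v_{a+2}, 4=v_{a+3}
  refine hchair (chair_emb (v (a + ((1:ℕ):Fin p))) x (v (a + ((0:ℕ):Fin p)))
      (v (a + ((2:ℕ):Fin p))) (v (a + ((3:ℕ):Fin p)))
    h1.symm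
    ((smalladj hp hv a 1 0 (by omega) (by omega)).mpr (by omega))
    ((smalladj hp hv a 1 2 (by omega) (by omega)).mpr (by omega))
    ((smalladj hp hv a 2 3 (by omega) (by omega)).mpr (by omega))
    h0 h2 h3
    ((smalladj hp hv a 0 2 (by omega) (by omega)).not.mpr (by omega))
    ((smalladj hp hv a 0 3 (by omega) (by omega)).not.mpr (by omega))
    ((smalladj hp hv a 1 3 (by omega) (by omega)).not.mpr (by omega))
    (hxv _) (hxv _) (hxv _)
    ((smalleq hp hvinj a 0 2 (by omega) (by omega)).not.mpr (by omega))
    ((smalleq hp hvinj a 0 3 (by omega) (by omega)).not.mpr (by omega))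
    ((smalleq hp hvinj a 1 3 (by omega) (by omega)).not.mpr (by omega)))

/-- isolated vertex, pendant to the left -/
lemma c2l (hchair : ¬ Nonempty (chair ↪g G)) (a : Fin p)
    (h0 : ¬ G.Adj x (v (a + ((0:ℕ) : Fin p))))
    (h1 : ¬ G.Adj x (v (a + ((1:ℕ) : Fin p))))
    (h2 : G.Adj x (v (a + ((2:ℕ) : Fin p))))
    (h3 : ¬ G.Adj x (v (a + ((3:ℕ) : Fin p)))) : False := by
  -- chair 0=v_{a+2}, 1=x, 2=v_{a+3}, 3=v_{a+1}, 4=v_a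
  refine hchair (chair_emb (v (a + ((2:ℕ):Fin p))) x (v (a + ((3:ℕ):Fin p)))
      (v (a + ((1:ℕ):Fin p))) (v (a + ((0:ℕ):Fin p)))
    h2.symm
    ((smalladj hp hv a 2 3 (by omega) (by omega)).mpr (by omega))
    ((smalladj hp hv a 2 1 (by omega) (by omega)).mpr (by omega))
    ((smalladj hp hv a 1 0 (by omega) (by omega)).mpr (by omega))
    h3 h1 h0
    ((smalladj hp hv a 3 1 (by omega) (by omega)).not.mpr (by omega))
    ((smalladj hp hv a 3 0 (by omega) (by omega)).not.mpr (by omega))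
    ((smalladj hp hv a 2 0 (by omega) (by omega)).not.mpr (by omega))
    (hxv _) (hxv _) (hxv _)
    ((smalleq hp hvinj a 3 1 (by omega) (by omega)).not.mpr (by omega))
    ((smalleq hp hvinj a 3 0 (by omega) (by omega)).not.mpr (by omega))
    ((smalleq hp hvinj a 2 0 (by omega) (by omega)).not.mpr (by omega)))

/-- right end of a run of length ≥ 4 -/
lemma c3r (hbull : ¬ Nonempty (bull ↪g G)) (a : Fin p)
    (h0 : G.Adj x (v (a + ((0:ℕ) : Fin p))))
    (h2 : G.Adj x (v (a + ((2:ℕ) : Fin p))))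
    (h3 : G.Adj x (v (a + ((3:ℕ) : Fin p))))
    (h4 : ¬ G.Adj x (v (a + ((4:ℕ) : Fin p)))) : False := by
  -- bull 0=v_a, 1=x, 2=v_{a+2}, 3=v_{a+3}, 4=v_{a+4}
  refine hbull (bull_emb (v (a + ((0:ℕ):Fin p))) x (v (a + ((2:ℕ):Fin p)))
      (v (a + ((3:ℕ):Fin p))) (v (a + ((4:ℕ):Fin p)))
    h0.symm h2
    ((smalladj hp hv a 2 3 (by omega) (by omega)).mpr (by omega))
    ((smalladj hp hv a 3 4 (by omega) (by omega)).mpr (by omega))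
    h3
    ((smalladj hp hv a 0 2 (by omega) (by omega)).not.mpr (by omega))
    ((smalladj hp hv a 0 3 (by omega) (by omega)).not.mpr (by omega))
    ((smalladj hp hv a 0 4 (by omega) (by omega)).not.mpr (by omega))
    h4
    ((smalladj hp hv a 2 4 (by omega) (by omega)).not.mpr (by omega))
    ((smalleq hp hvinj a 0 2 (by omega) (by omega)).not.mpr (by omega))
    ((smalleq hp hvinj a 0 3 (by omega) (by omega)).not.mpr (by omega))
    ((smalleq hp hvinj a 0 4 (by omega) (by omega)).not.mpr (by omega))
    (hxv _)
    ((smalleq hp hvinj a 2 4 (by omega) (by omega)).not.mpr (by omega)))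
end Claims

section Claims2
variable {V : Type*} {G : SimpleGraph V} {p : ℕ} [NeZero p] {v : Fin p → V} {x : V}
variable (hp : 7 ≤ p) (hvinj : Function.Injective v)
  (hv : ∀ i j : Fin p, G.Adj (v i) (v j) ↔ (cycleG p).Adj i j)
  (hxv : ∀ j, x ≠ v j)

lemma addadd (a : Fin p) (m n : ℕ) :
    a + ((m : Fin p)) + ((n : Fin p)) = a + (((m + n : ℕ)) : Fin p) := by
  push_cast; ring

lemma castp (k : ℕ) : (((k + p : ℕ)) : Fin p) = ((k : ℕ) : Fin p) := by
  push_cast [Fin.natCast_self]; ring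

lemma fareq (hp : 7 ≤ p) (hvinj : Function.Injective v) (a : Fin p) (s d : ℕ)
    (hs : s ≤ 6) (hdp : d < p) (h : s ≠ d) :
    v (a + (s : Fin p)) ≠ v (a + (d : Fin p)) := by
  rw [Ne, veqg hvinj, Nat.mod_eq_of_lt (show s < p by omega), Nat.mod_eq_of_lt hdp]
  exact h

lemma faradj (hp : 7 ≤ p)
    (hv : ∀ i j : Fin p, G.Adj (v i) (v j) ↔ (cycleG p).Adj i j)
    (a : Fin p) (s d : ℕ) (hs : s ≤ 5) (hdp : d < p)
    (h1 : d ≠ s + 1) (h2 : s ≠ d + 1) (h3 : ¬(d = p - 1 ∧ s = 0)) :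
    ¬ G.Adj (v (a + (s : Fin p))) (v (a + (d : Fin p))) := by
  rw [vadjg hp hv, Nat.mod_eq_of_lt hdp, Nat.mod_eq_of_lt (show s + 1 < p by omega),
    Nat.mod_eq_of_lt (show s < p by omega)]
  rcases Nat.lt_or_ge (d + 1) p with h | h
  · rw [Nat.mod_eq_of_lt h]; omega
  · have hdp1 : d + 1 = p := by omega
    rw [hdp1, Nat.mod_self]; omega

include hp hvinj hv hxv

/-- run of length 2 starting at `a+1` with a far neighbour -/
lemma c4l (hbull : ¬ Nonempty (bull ↪g G)) (a : Fin p) (d : ℕ)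
    (hdp : d < p) (hd4 : 4 ≤ d) (hd2 : d ≤ p - 2)
    (h0 : ¬ G.Adj x (v (a + ((0:ℕ) : Fin p))))
    (h1 : G.Adj x (v (a + ((1:ℕ) : Fin p))))
    (h2 : G.Adj x (v (a + ((2:ℕ) : Fin p))))
    (hy : G.Adj x (v (a + ((d:ℕ) : Fin p)))) : False := by
  refine hbull (bull_emb (v (a + ((0:ℕ):Fin p))) (v (a + ((1:ℕ):Fin p)))
      (v (a + ((2:ℕ):Fin p))) x (v (a + ((d:ℕ):Fin p)))
    ((smalladj hp hv a 0 1 (by omega) (by omega)).mpr (by omega))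
    ((smalladj hp hv a 1 2 (by omega) (by omega)).mpr (by omega))
    h2.symm hy h1.symm
    ((smalladj hp hv a 0 2 (by omega) (by omega)).not.mpr (by omega))
    (fun h => h0 h.symm)
    (faradj hp hv a 0 d (by omega) hdp (by omega) (by omega) (by omega))
    (faradj hp hv a 1 d (by omega) hdp (by omega) (by omega) (by omega))
    (faradj hp hv a 2 d (by omega) hdp (by omega) (by omega) (by omega))
    ((smalleq hp hvinj a 0 2 (by omega) (by omega)).not.mpr (by omega))
    (Ne.symm (hxv _))
    (fareq hp hvinj a 0 d (by omega) hdp (by omega))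
    (fareq hp hvinj a 1 d (by omega) hdp (by omega))
    (fareq hp hvinj a 2 d (by omega) hdp (by omega)))

/-- run of length 2 ending before `a+3` with a far neighbour -/
lemma c4r (hbull : ¬ Nonempty (bull ↪g G)) (a : Fin p) (d : ℕ)
    (hdp : d < p) (hd5 : 5 ≤ d)
    (h1 : G.Adj x (v (a + ((1:ℕ) : Fin p))))
    (h2 : G.Adj x (v (a + ((2:ℕ) : Fin p))))
    (h3 : ¬ G.Adj x (v (a + ((3:ℕ) : Fin p))))
    (hy : G.Adj x (v (a + ((d:ℕ) : Fin p)))) : False := by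
  refine hbull (bull_emb (v (a + ((3:ℕ):Fin p))) (v (a + ((2:ℕ):Fin p)))
      (v (a + ((1:ℕ):Fin p))) x (v (a + ((d:ℕ):Fin p)))
    ((smalladj hp hv a 3 2 (by omega) (by omega)).mpr (by omega))
    ((smalladj hp hv a 2 1 (by omega) (by omega)).mpr (by omega))
    h1.symm hy h2.symm
    ((smalladj hp hv a 3 1 (by omega) (by omega)).not.mpr (by omega))
    (fun h => h3 h.symm)
    (faradj hp hv a 3 d (by omega) hdp (by omega) (by omega) (by omega))
    (faradj hp hv a 2 d (by omega) hdp (by omega) (by omega) (by omega))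
    (faradj hp hv a 1 d (by omega) hdp (by omega) (by omega) (by omega))
    ((smalleq hp hvinj a 3 1 (by omega) (by omega)).not.mpr (by omega))
    (Ne.symm (hxv _))
    (fareq hp hvinj a 3 d (by omega) hdp (by omega))
    (fareq hp hvinj a 2 d (by omega) hdp (by omega))
    (fareq hp hvinj a 1 d (by omega) hdp (by omega)))

end Claims2

section NoNbr
variable {V : Type*} {G : SimpleGraph V} {p : ℕ} [NeZero p] {v : Fin p → V}

lemma compl_unpack (x : V) (hx : x ∈ (Set.range v ∪ Aset G v ∪ Dset G v)ᶜ) :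
    (∀ j, x ≠ v j) ∧ x ∉ Aset G v ∧ x ∉ Dset G v := by
  simp only [Set.mem_compl_iff, Set.mem_union, not_or] at hx
  exact ⟨fun j h => hx.1.1 ⟨j, h.symm⟩, hx.1.2, hx.2⟩

lemma no_nbr (hbull : ¬ Nonempty (bull ↪g G)) (hchair : ¬ Nonempty (chair ↪g G))
    (hp : 7 ≤ p) (hodd : Odd p) (hvinj : Function.Injective v)
    (hv : ∀ i j : Fin p, G.Adj (v i) (v j) ↔ (cycleG p).Adj i j)
    (x : V) (hx : x ∈ (Set.range v ∪ Aset G v ∪ Dset G v)ᶜ) :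
    ∀ j, ¬ G.Adj x (v j) := by
  classical
  obtain ⟨hxv, hxA, hxD⟩ := compl_unpack x hx
  intro j hj
  by_cases hcons : ∃ a : Fin p, G.Adj x (v a) ∧ G.Adj x (v (a + 1))
  · -- there are two consecutive neighbours
    obtain ⟨aj, haj0, haj1⟩ := hcons
    have hexm : ∃ m : Fin p, ¬ G.Adj x (v m) := by
      by_contra h
      push_neg at h
      exact hxD ⟨hxv, h⟩
    obtain ⟨m, hm⟩ := hexm
    have hmt : ¬ G.Adj x (v (aj + (((m - aj).val : ℕ) : Fin p))) := by
      rw [Fin.cast_val_eq_self, show aj + (m - aj) = m from by ring]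
      exact hm
    have htp : (m - aj).val < p := (m - aj).isLt
    have ht0 : (m - aj).val ≠ 0 := by
      intro h
      rw [h] at hmt
      simp only [Nat.cast_zero, add_zero] at hmt
      exact hmt haj0
    have ht1 : (m - aj).val ≠ 1 := by
      intro h
      rw [h, Nat.cast_one] at hmt
      exact hmt haj1
    have hPex : ∃ k : ℕ, 2 ≤ k ∧ ¬ G.Adj x (v (aj + (k : Fin p))) :=
      ⟨(m - aj).val, by omega, hmt⟩
    obtain ⟨ht12, ht1adj⟩ := Nat.find_spec hPex
    set t1 := Nat.find hPex with ht1_def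
    have ht1min : ∀ k, k < t1 → 2 ≤ k → G.Adj x (v (aj + (k : Fin p))) := by
      intro k hk h2
      by_contra h
      exact (Nat.find_min hPex hk) ⟨h2, h⟩
    have ht1le : t1 ≤ (m - aj).val := Nat.find_min' hPex ⟨by omega, hmt⟩
    have ht1p : t1 < p := by omega
    have hQex : ∃ s : ℕ, 1 ≤ s ∧ ¬ G.Adj x (v (aj + ((p - s : ℕ) : Fin p))) := by
      refine ⟨p - t1, by omega, ?_⟩
      rw [show p - (p - t1) = t1 from by omega]
      exact ht1adj
    obtain ⟨hs11, hs1adj⟩ := Nat.find_spec hQex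
    set s1 := Nat.find hQex with hs1_def
    have hs1min : ∀ s, s < s1 → 1 ≤ s → G.Adj x (v (aj + ((p - s : ℕ) : Fin p))) := by
      intro s hs h1
      by_contra h
      exact (Nat.find_min hQex hs) ⟨h1, h⟩
    have hs1le : s1 ≤ p - t1 := by
      refine Nat.find_min' hQex ⟨by omega, ?_⟩
      rw [show p - (p - t1) = t1 from by omega]
      exact ht1adj
    set e := aj + ((p - s1 : ℕ) : Fin p) with he_def
    set L := s1 + t1 - 1 with hL_def
    have hL2 : 2 ≤ L := by omega
    have hLp : L + 1 ≤ p := by omega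
    have hne : ¬ G.Adj x (v (e + ((0:ℕ) : Fin p))) := by
      simpa using hs1adj
    have hrun : ∀ i : ℕ, 1 ≤ i → i ≤ L → G.Adj x (v (e + (i : Fin p))) := by
      intro i hi1 hiL
      rw [he_def, addadd]
      rcases lt_trichotomy i s1 with h | h | h
      · rw [show p - s1 + i = p - (s1 - i) from by omega]
        exact hs1min (s1 - i) (by omega) (by omega)
      · rw [show p - s1 + i = p from by omega, Fin.natCast_self, add_zero]
        exact haj0
      · rw [show p - s1 + i = (i - s1) + p from by omega, castp]
        rcases eq_or_lt_of_le (show s1 + 1 ≤ i from h) with h' | h'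
        · rw [show i - s1 = 1 from by omega, Nat.cast_one]
          exact haj1
        · exact ht1min (i - s1) (by omega) (by omega)
    have hend : ¬ G.Adj x (v (e + ((L + 1 : ℕ) : Fin p))) := by
      rw [he_def, addadd, show p - s1 + (L + 1) = t1 + p from by omega, castp]
      exact ht1adj
    have hL23 : L = 2 ∨ L = 3 ∨ 4 ≤ L := by omega
    rcases hL23 with hL | hL | hL
    · -- L = 2 : run of length exactly 2
      refine c1 hp hvinj hv hxv hbull e hne (hrun 1 (by omega) (by omega))
        (hrun 2 (by omega) (by omega)) ?_
      rw [show (3:ℕ) = L + 1 from by omega]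
      exact hend
    · -- L = 3
      by_cases hy : ∃ y : Fin p, G.Adj x (v y) ∧ y ≠ e + ((1:ℕ):Fin p) ∧
          y ≠ e + ((2:ℕ):Fin p) ∧ y ≠ e + ((3:ℕ):Fin p)
      · obtain ⟨y, hyS, hy1, hy2, hy3⟩ := hy
        have hyd : y = e + (((y - e).val : ℕ) : Fin p) := by
          rw [Fin.cast_val_eq_self]; ring
        set d := (y - e).val with hd_def
        have hdp : d < p := (y - e).isLt
        have hd0 : d ≠ 0 := by
          intro h
          rw [hyd, h] at hyS
          exact hne hyS
        have hd1 : d ≠ 1 := fun h => hy1 (by rw [hyd, h])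
        have hd2 : d ≠ 2 := fun h => hy2 (by rw [hyd, h])
        have hd3 : d ≠ 3 := fun h => hy3 (by rw [hyd, h])
        have hd4 : d ≠ 4 := by
          intro h
          rw [hyd, h] at hyS
          rw [show (4:ℕ) = L + 1 from by omega] at hyS
          exact hend hyS
        rcases Nat.lt_or_ge d (p - 1) with hdlt | hdge
        · exact c4l hp hvinj hv hxv hbull e d hdp (by omega) (by omega) hne
            (hrun 1 (by omega) (by omega)) (hrun 2 (by omega) (by omega)) (hyd ▸ hyS)
        · have hdeq : d = p - 1 := by omega
          refine c4r hp hvinj hv hxv hbull (e + ((1:ℕ):Fin p)) (p - 2)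
            (by omega) (by omega) ?_ ?_ ?_ ?_
          · rw [addadd]
            exact hrun 2 (by omega) (by omega)
          · rw [addadd]
            exact hrun 3 (by omega) (by omega)
          · rw [addadd, show (1 + 3 : ℕ) = L + 1 from by omega]
            exact hend
          · rw [addadd, show 1 + (p - 2) = d from by omega]
            exact hyd ▸ hyS
      · -- x is in the A-set : contradiction
        apply hxA
        refine Set.mem_iUnion.mpr ⟨e + ((2:ℕ):Fin p), hxv, ?_⟩
        push_neg at hy
        have he1 : (e + ((2:ℕ):Fin p)) - 1 = e + ((1:ℕ):Fin p) := by push_cast; ring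
        have he3 : (e + ((2:ℕ):Fin p)) + 1 = e + ((3:ℕ):Fin p) := by push_cast; ring
        intro j'
        rw [he1, he3]
        constructor
        · intro hadj
          by_cases h1 : j' = e + ((1:ℕ):Fin p)
          · exact Or.inl h1
          by_cases h2 : j' = e + ((2:ℕ):Fin p)
          · exact Or.inr (Or.inl h2)
          exact Or.inr (Or.inr (hy j' hadj h1 h2))
        · rintro (h | h | h) <;> rw [h]
          · exact hrun 1 (by omega) (by omega)
          · exact hrun 2 (by omega) (by omega)
          · exact hrun 3 (by omega) (by omega)
    · -- L ≥ 4 : long run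
      refine c3r hp hvinj hv hxv hbull (e + (((L - 3 : ℕ)):Fin p)) ?_ ?_ ?_ ?_
      · rw [addadd, show L - 3 + 0 = L - 3 from by omega]
        exact hrun (L - 3) (by omega) (by omega)
      · rw [addadd, show L - 3 + 2 = L - 1 from by omega]
        exact hrun (L - 1) (by omega) (by omega)
      · rw [addadd, show L - 3 + 3 = L from by omega]
        exact hrun L (by omega) (by omega)
      · rw [addadd, show L - 3 + 4 = L + 1 from by omega]
        exact hend
  · -- no two consecutive neighbours : S is closed under +2, hence everything
    have hstep : ∀ a : Fin p, G.Adj x (v a) → G.Adj x (v (a + ((2:ℕ) : Fin p))) := by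
      intro a ha
      have hkey : ((p - 1 : ℕ) : Fin p) + 1 = 0 := by
        have h1 : ((p - 1 : ℕ) : Fin p) + ((1:ℕ) : Fin p) = (((p - 1 + 1 : ℕ)) : Fin p) := by
          push_cast; ring
        rw [Nat.cast_one] at h1
        rw [h1, show p - 1 + 1 = p from by omega, Fin.natCast_self]
      have hprev : ¬ G.Adj x (v (a + ((p - 1 : ℕ) : Fin p))) := by
        intro h
        exact hcons ⟨a + ((p - 1 : ℕ):Fin p), h, by rw [add_assoc, hkey, add_zero]; exact ha⟩
      have hnext : ¬ G.Adj x (v (a + 1)) := fun h => hcons ⟨a, ha, h⟩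
      by_contra h2
      refine c2r hp hvinj hv hxv hchair (a + ((p - 1 : ℕ):Fin p)) ?_ ?_ ?_ ?_
      · simpa using hprev
      · rw [addadd, show p - 1 + 1 = p from by omega, Fin.natCast_self, add_zero]
        exact ha
      · rw [addadd, show p - 1 + 2 = 1 + p from by omega, castp, Nat.cast_one]
        exact hnext
      · rw [addadd, show p - 1 + 3 = 2 + p from by omega, castp]
        exact h2
    have hall : ∀ k : ℕ, G.Adj x (v (j + ((2 * k : ℕ) : Fin p))) := by
      intro k
      induction k with
      | zero => simpa using hj
      | succ n ih =>
          have h2 := hstep _ ih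
          rw [addadd, show 2 * n + 2 = 2 * (n + 1) from by ring] at h2
          exact h2
    have hallj : ∀ i : Fin p, G.Adj x (v i) := by
      intro i
      have hid : j + ((i - j : Fin p)) = i := by ring
      rcases Nat.even_or_odd (i - j).val with ⟨k, hk⟩ | ⟨k, hk⟩
      · have h3 := hall k
        rw [show 2 * k = (i - j).val from by omega, Fin.cast_val_eq_self, hid] at h3
        exact h3
      · obtain ⟨mo, hmo⟩ := hodd
        have h3 := hall (k + mo + 1)
        rw [show 2 * (k + mo + 1) = (i - j).val + p from by omega, castp,
          Fin.cast_val_eq_self, hid] at h3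
        exact h3
    exact hxD ⟨hxv, hallj⟩

end NoNbr

section Main
variable {V : Type*} {G : SimpleGraph V} {p : ℕ} [NeZero p] {v : Fin p → V}

lemma dom_step (hbull : ¬ Nonempty (bull ↪g G)) (hchair : ¬ Nonempty (chair ↪g G))
    (hp : 7 ≤ p) (hodd : Odd p) (hvinj : Function.Injective v)
    (hv : ∀ i j : Fin p, G.Adj (v i) (v j) ↔ (cycleG p).Adj i j)
    (w : V) (hwD : w ∈ Dset G v)
    (a b : ((Set.range v ∪ Aset G v ∪ Dset G v)ᶜ : Set V))
    (hwa : G.Adj w a) (hab : G.Adj (a : V) b) : G.Adj w b := by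
  by_contra hwb
  obtain ⟨hav, -, -⟩ := compl_unpack (a : V) a.2
  obtain ⟨hbv, -, -⟩ := compl_unpack (b : V) b.2
  have hna := no_nbr hbull hchair hp hodd hvinj hv (a : V) a.2
  have hnb := no_nbr hbull hchair hp hodd hvinj hv (b : V) b.2
  have hwv : ∀ j, w ≠ v j := hwD.1
  have hwadj : ∀ j, G.Adj w (v j) := hwD.2
  have hwb' : w ≠ (b : V) := fun h => (compl_unpack _ b.2).2.2 (h ▸ hwD)
  exact hchair (chair_emb w (v ((0 : Fin p) + ((0:ℕ) : Fin p)))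
      (v ((0 : Fin p) + ((2:ℕ) : Fin p))) (a : V) (b : V)
    (hwadj _) (hwadj _) hwa hab
    ((smalladj hp hv 0 0 2 (by omega) (by omega)).not.mpr (by omega))
    (fun h => hna _ h.symm)
    (fun h => hnb _ h.symm)
    (fun h => hna _ h.symm)
    (fun h => hnb _ h.symm)
    hwb
    ((smalleq hp hvinj 0 0 2 (by omega) (by omega)).not.mpr (by omega))
    (Ne.symm (hav _))
    (Ne.symm (hbv _))
    (Ne.symm (hav _))
    (Ne.symm (hbv _))
    hwb')

end Main


theorem D_dominates_components {V : Type*} (G : SimpleGraph V)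
    (hbull : ¬ Nonempty (bull ↪g G)) (hchair : ¬ Nonempty (chair ↪g G))
    (p : ℕ) [NeZero p] (hodd : Odd p) (hp : 7 ≤ p)
    (v : Fin p → V) (hvinj : Function.Injective v)
    (hv : ∀ i j : Fin p, G.Adj (v i) (v j) ↔ (cycleG p).Adj i j)
    (w : V) (hwD : w ∈ Dset G v)
    (C : (G.induce ((Set.range v ∪ Aset G v ∪ Dset G v)ᶜ)).ConnectedComponent)
    (hadj : ∃ u : ((Set.range v ∪ Aset G v ∪ Dset G v)ᶜ : Set V),
      (G.induce ((Set.range v ∪ Aset G v ∪ Dset G v)ᶜ)).connectedComponentMk u = C ∧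
        G.Adj w u) :
    ∀ u : ((Set.range v ∪ Aset G v ∪ Dset G v)ᶜ : Set V),
      (G.induce ((Set.range v ∪ Aset G v ∪ Dset G v)ᶜ)).connectedComponentMk u = C →
        G.Adj w u := by
  intro u hu
  obtain ⟨u0, hu0C, hwu0⟩ := hadj
  have hreach : (G.induce ((Set.range v ∪ Aset G v ∪ Dset G v)ᶜ)).Reachable u0 u :=
    SimpleGraph.ConnectedComponent.exact (hu0C.trans hu.symm)
  suffices H : ∀ a b : ((Set.range v ∪ Aset G v ∪ Dset G v)ᶜ : Set V),
      (G.induce ((Set.range v ∪ Aset G v ∪ Dset G v)ᶜ)).Reachable a b →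
        G.Adj w a → G.Adj w b from H u0 u hreach hwu0
  intro a b hr
  obtain ⟨wk⟩ := hr
  induction wk with
  | nil => exact fun h => h
  | @cons s c d hsc q ih =>
      intro hws
      exact ih (dom_step hbull hchair hp hodd hvinj hv w hwD s c hws hsc)
end
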